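/- arXiv:1711.10923 — 3 statements merged into one kernel-verified Lean document; each statement's English description precedes it below -/
import Mathlib

section
/- Let v ∈ B_PD \ {(1,2.5),(2.5,1)} and ε₁, ε₂ > 0, and suppose both players play the semi-cooperative strategies s₁^{v,ε₁} and s₂^{v,ε₂} determined by the same point v. Then every trajectory (x̄_t)_{t≥1} of the dynamical system induced by the profile (s₁^{v,ε₁}, s₂^{v,ε₂}), from any initial point in 𝔖, converges to v as t → ∞. -/
/- Semi-cooperative strategies in the repeated Prisoner's Dilemma (Section 4 of the
   paper). Actions: `true` = C (cooperate), `false` = D (defect). The payoff plane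
   is the Euclidean plane ℝ². -/

/-- The Euclidean plane. -/
abbrev E2 := EuclideanSpace ℝ (Fin 2)

/-- The point (a, b) of the Euclidean plane. -/
noncomputable def pt (a b : ℝ) : E2 := (WithLp.equiv 2 (Fin 2 → ℝ)).symm ![a, b]

/-- The vector payoff function of the Prisoner's Dilemma:
    u(C,C)=(2,2), u(C,D)=(0,3), u(D,C)=(3,0), u(D,D)=(1,1). -/
noncomputable def payoffPD : Bool → Bool → E2
  | true,  true  => pt 2 2
  | true,  false => pt 0 3
  | false, true  => pt 3 0
  | false, false => pt 1 1

/-- 𝔖 = conv{(2,2),(0,3),(3,0),(1,1)}. -/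
def SPD : Set E2 := convexHull ℝ {pt 2 2, pt 0 3, pt 3 0, pt 1 1}

/-- The set of β-core payoffs of the Prisoner's Dilemma:
    {(x, 3−x/2) : 1 ≤ x ≤ 2} ∪ {(3−y/2, y) : 1 ≤ y ≤ 2}. -/
def BPD : Set E2 :=
  {p | ∃ x : ℝ, 1 ≤ x ∧ x ≤ 2 ∧ p = pt x (3 - x / 2)} ∪
  {p | ∃ y : ℝ, 1 ≤ y ∧ y ≤ 2 ∧ p = pt (3 - y / 2) y}

/-- T₁(v) = {x ∈ 𝔖 : x₂ ≤ ((v₂−1)/(v₁−1))·x₁ + (v₁−v₂)/(v₁−1)}. -/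
def T1 (v : E2) : Set E2 :=
  {x ∈ SPD | x 1 ≤ (v 1 - 1) / (v 0 - 1) * x 0 + (v 0 - v 1) / (v 0 - 1)}

/-- T₂(v) = {x ∈ 𝔖 : x₂ ≥ ((v₂−1)/(v₁−1))·x₁ + (v₁−v₂)/(v₁−1)}. -/
def T2 (v : E2) : Set E2 :=
  {x ∈ SPD | (v 1 - 1) / (v 0 - 1) * x 0 + (v 0 - v 1) / (v 0 - 1) ≤ x 1}

/-- K₁(v,ε) = T₁(v)^ε ∩ {x ∈ 𝔖 : x₁ ≥ 1 and x₂ ≤ v₂}, where `·^ε` is the closed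
ε-neighbourhood. -/
def K1 (v : E2) (ε : ℝ) : Set E2 :=
  Metric.cthickening ε (T1 v) ∩ {x ∈ SPD | 1 ≤ x 0 ∧ x 1 ≤ v 1}

/-- K₂(v,ε) = T₂(v)^ε ∩ {x ∈ 𝔖 : x₁ ≤ v₁ and x₂ ≥ 1}. -/
def K2 (v : E2) (ε : ℝ) : Set E2 :=
  Metric.cthickening ε (T2 v) ∩ {x ∈ SPD | x 0 ≤ v 0 ∧ 1 ≤ x 1}

open Classical in
/-- The semi-cooperative strategy of player 1 determined by `v` and `ε`:
play C iff the current average payoff lies in K₁(v,ε). -/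
noncomputable def semi1 (v : E2) (ε : ℝ) (x : E2) : Bool :=
  if x ∈ K1 v ε then true else false

open Classical in
/-- The semi-cooperative strategy of player 2 determined by `v` and `ε`:
play C iff the current average payoff lies in K₂(v,ε). -/
noncomputable def semi2 (v : E2) (ε : ℝ) (x : E2) : Bool :=
  if x ∈ K2 v ε then true else false

/-- `x` is the trajectory (sequence of average payoffs), indexed from stage 1, of the
dynamical system induced by `f = u ∘ s`, starting at `x 1 ∈ 𝔖`:
x̄_{t+1} = (t·x̄_t + f(x̄_t))/(t+1). -/
def IsTrajPD (f : E2 → E2) (x : ℕ → E2) : Prop :=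
  x 1 ∈ SPD ∧ ∀ t : ℕ, 1 ≤ t →
    x (t + 1) = ((t : ℝ) + 1)⁻¹ • ((t : ℝ) • x t + f (x t))

open Filter

namespace SCaux

lemma pt_app0 (a b : ℝ) : pt a b 0 = a := rfl
lemma pt_app1 (a b : ℝ) : pt a b 1 = b := rfl

/-- The linear functional vanishing on the line through (1,1) and v. -/
noncomputable def lfun (v y : E2) : ℝ := (v 1 - 1) * (y 0 - 1) - (v 0 - 1) * (y 1 - 1)

lemma spd_bounds {y : E2} (hy : y ∈ SPD) :
    3/2 ≤ y 0 + y 1 / 2 ∧ y 0 + y 1 / 2 ≤ 3 ∧ 3/2 ≤ y 1 + y 0 / 2 ∧ y 1 + y 0 / 2 ≤ 3 := by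
  have h : SPD ⊆ {z : E2 | 3/2 ≤ z 0 + z 1 / 2 ∧ z 0 + z 1 / 2 ≤ 3 ∧
      3/2 ≤ z 1 + z 0 / 2 ∧ z 1 + z 0 / 2 ≤ 3} := by
    apply convexHull_min
    · intro z hz
      simp only [Set.mem_insert_iff, Set.mem_singleton_iff] at hz
      rcases hz with rfl | rfl | rfl | rfl <;>
        simp only [Set.mem_setOf_eq, pt_app0, pt_app1] <;> norm_num
    · intro u hu w hw α β hα hβ hαβ
      simp only [Set.mem_setOf_eq, PiLp.add_apply, PiLp.smul_apply, smul_eq_mul] at hu hw ⊢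
      obtain ⟨a1, a2, a3, a4⟩ := hu
      obtain ⟨b1, b2, b3, b4⟩ := hw
      refine ⟨?_, ?_, ?_, ?_⟩ <;> nlinarith
  exact h hy

lemma spd_coord {y : E2} (hy : y ∈ SPD) : 0 ≤ y 0 ∧ y 0 ≤ 3 ∧ 0 ≤ y 1 ∧ y 1 ≤ 3 := by
  obtain ⟨h1, h2, h3, h4⟩ := spd_bounds hy
  refine ⟨by linarith, by linarith, by linarith, by linarith⟩

lemma payoff_mem (b1 b2 : Bool) : payoffPD b1 b2 ∈ SPD := by
  have hsub := subset_convexHull ℝ ({pt 2 2, pt 0 3, pt 3 0, pt 1 1} : Set E2)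
  cases b1 <;> cases b2 <;> simp only [payoffPD] <;> apply hsub <;> simp

lemma spd_convex : Convex ℝ SPD := convex_convexHull ℝ _

lemma traj_mem (F : E2 → E2) (hF : ∀ y, F y ∈ SPD) (x : ℕ → E2) (hx : IsTrajPD F x) :
    ∀ t : ℕ, 1 ≤ t → x t ∈ SPD := by
  intro t ht
  induction t, ht using Nat.le_induction with
  | base => exact hx.1
  | succ t ht ih =>
    rw [hx.2 t ht]
    have h1 : (0:ℝ) < (t:ℝ) + 1 := by positivity
    have key : ((t:ℝ)+1)⁻¹ • ((t:ℝ) • x t + F (x t))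
        = ((t:ℝ)/((t:ℝ)+1)) • x t + ((1:ℝ)/((t:ℝ)+1)) • F (x t) := by
      rw [smul_add, smul_smul]
      congr 1
      · congr 1
        field_simp
      · rw [one_div]
    rw [key]
    exact spd_convex ih (hF _) (by positivity) (by positivity) (by field_simp)

lemma T1_iff {v : E2} (hv0 : 1 < v 0) (y : E2) : y ∈ T1 v ↔ y ∈ SPD ∧ 0 ≤ lfun v y := by
  have h : (0:ℝ) < v 0 - 1 := by linarith
  unfold T1
  simp only [Set.mem_setOf_eq, lfun]
  constructor
  · rintro ⟨h1, h2⟩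
    refine ⟨h1, ?_⟩
    rw [div_mul_eq_mul_div, div_add_div _ _ (by linarith) (by linarith), le_div_iff₀ (by nlinarith)] at h2
    nlinarith
  · rintro ⟨h1, h2⟩
    refine ⟨h1, ?_⟩
    rw [div_mul_eq_mul_div, div_add_div _ _ (by linarith) (by linarith), le_div_iff₀ (by nlinarith)]
    nlinarith

lemma T2_iff {v : E2} (hv0 : 1 < v 0) (y : E2) : y ∈ T2 v ↔ y ∈ SPD ∧ lfun v y ≤ 0 := by
  have h : (0:ℝ) < v 0 - 1 := by linarith
  unfold T2
  simp only [Set.mem_setOf_eq, lfun]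
  constructor
  · rintro ⟨h1, h2⟩
    refine ⟨h1, ?_⟩
    rw [div_mul_eq_mul_div, div_add_div _ _ (by linarith) (by linarith), div_le_iff₀ (by nlinarith)] at h2
    nlinarith
  · rintro ⟨h1, h2⟩
    refine ⟨h1, ?_⟩
    rw [div_mul_eq_mul_div, div_add_div _ _ (by linarith) (by linarith), div_le_iff₀ (by nlinarith)]
    nlinarith

end SCaux

namespace SCaux

lemma norm_sub_le5 {y : E2} (hy : y ∈ SPD) (g : E2) (hg0 : 0 ≤ g 0) (hg3 : g 0 ≤ 3)
    (hg1 : 0 ≤ g 1) (hg13 : g 1 ≤ 3) : ‖y - g‖ ≤ 5 := by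
  obtain ⟨c1, c2, c3, c4⟩ := spd_coord hy
  have h2 : ‖y - g‖ = Real.sqrt ((y 0 - g 0)^2 + (y 1 - g 1)^2) := by
    rw [EuclideanSpace.norm_eq, Fin.sum_univ_two]
    simp [PiLp.sub_apply, Real.norm_eq_abs, sq_abs]
  rw [h2]
  have h25 : Real.sqrt 25 = 5 := by
    rw [show (25:ℝ) = 5^2 by norm_num, Real.sqrt_sq (by norm_num : (0:ℝ) ≤ 5)]
  calc Real.sqrt ((y 0 - g 0)^2 + (y 1 - g 1)^2) ≤ Real.sqrt 25 := by
        apply Real.sqrt_le_sqrt; nlinarith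
    _ = 5 := h25

lemma mem_K1_of {v : E2} {ε : ℝ} (hε : 0 < ε) (hv0 : 1 < v 0) (hv11 : 1 < v 1)
    {y : E2} (hy : y ∈ SPD)
    (hL : -(ε * (2*(v 1 - 1) + (v 0 - 1))/5) ≤ lfun v y)
    (h0 : 1 ≤ y 0) (h1 : y 1 ≤ v 1) : y ∈ K1 v ε := by
  refine ⟨?_, hy, h0, h1⟩
  by_cases hL0 : 0 ≤ lfun v y
  · exact Metric.self_subset_cthickening _ ((T1_iff hv0 y).2 ⟨hy, hL0⟩)
  · push_neg at hL0
    set G : ℝ := 2*(v 1 - 1) + (v 0 - 1) with hGdef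
    have hG : 0 < G := by rw [hGdef]; linarith
    set L : ℝ := lfun v y with hLdef
    set s : ℝ := (-L)/(G - L) with hsdef
    have hs0 : 0 ≤ s := div_nonneg (by linarith) (by linarith)
    have hs1 : s ≤ 1 := by rw [hsdef, div_le_one (by linarith)]; linarith
    set w : E2 := (1 - s) • y + s • (pt 3 0) with hwdef
    have hw0 : w 0 = (1-s) * y 0 + s * 3 := by
      rw [hwdef]; simp [PiLp.add_apply, PiLp.smul_apply, smul_eq_mul, pt_app0]
    have hw1 : w 1 = (1-s) * y 1 := by
      rw [hwdef]; simp [PiLp.add_apply, PiLp.smul_apply, smul_eq_mul, pt_app1]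
    have hwS : w ∈ SPD := spd_convex hy (payoff_mem false true) (by linarith) hs0 (by ring)
    have hLw : lfun v w = 0 := by
      have hexp : lfun v w = (1-s)*L + s*G := by
        simp only [lfun, hw0, hw1, hGdef, hLdef]; ring
      have hsmul : s * (G - L) = -L := by
        rw [hsdef]; exact div_mul_cancel₀ _ (by linarith)
      rw [hexp]; linear_combination hsmul
    have hwT1 : w ∈ T1 v := (T1_iff hv0 w).2 ⟨hwS, le_of_eq hLw.symm⟩
    have hdist : dist y w ≤ ε := by
      have hyw : y - w = s • (y - pt 3 0) := by
        rw [hwdef, smul_sub, sub_smul, one_smul]; abel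
      rw [dist_eq_norm, hyw, norm_smul, Real.norm_eq_abs, abs_of_nonneg hs0]
      have hnorm : ‖y - pt 3 0‖ ≤ 5 := by
        apply norm_sub_le5 hy <;> simp [pt_app0, pt_app1] <;> norm_num
      have hsmall : s ≤ ε/5 := by
        rw [hsdef, div_le_div_iff₀ (by linarith) (by norm_num)]
        nlinarith [mul_nonneg hε.le (neg_nonneg.2 hL0.le)]
      nlinarith [norm_nonneg (y - pt 3 0)]
    exact Metric.mem_cthickening_of_dist_le y w ε _ hwT1 hdist

lemma mem_K2_of {v : E2} {ε : ℝ} (hε : 0 < ε) (hv0 : 1 < v 0) (hv11 : 1 < v 1)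
    {y : E2} (hy : y ∈ SPD)
    (hL : lfun v y ≤ ε * ((v 1 - 1) + 2*(v 0 - 1))/5)
    (h0 : y 0 ≤ v 0) (h1 : 1 ≤ y 1) : y ∈ K2 v ε := by
  refine ⟨?_, hy, h0, h1⟩
  by_cases hL0 : lfun v y ≤ 0
  · exact Metric.self_subset_cthickening _ ((T2_iff hv0 y).2 ⟨hy, hL0⟩)
  · push_neg at hL0
    set G : ℝ := (v 1 - 1) + 2*(v 0 - 1) with hGdef
    have hG : 0 < G := by rw [hGdef]; linarith
    set L : ℝ := lfun v y with hLdef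
    set s : ℝ := L/(G + L) with hsdef
    have hs0 : 0 ≤ s := div_nonneg (by linarith) (by linarith)
    have hs1 : s ≤ 1 := by rw [hsdef, div_le_one (by linarith)]; linarith
    set w : E2 := (1 - s) • y + s • (pt 0 3) with hwdef
    have hw0 : w 0 = (1-s) * y 0 := by
      rw [hwdef]; simp [PiLp.add_apply, PiLp.smul_apply, smul_eq_mul, pt_app0]
    have hw1 : w 1 = (1-s) * y 1 + s * 3 := by
      rw [hwdef]; simp [PiLp.add_apply, PiLp.smul_apply, smul_eq_mul, pt_app1]
    have hwS : w ∈ SPD := spd_convex hy (payoff_mem true false) (by linarith) hs0 (by ring)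
    have hLw : lfun v w = 0 := by
      have hexp : lfun v w = (1-s)*L + s*(-G) := by
        simp only [lfun, hw0, hw1, hGdef, hLdef]; ring
      have hsmul : s * (G + L) = L := by
        rw [hsdef]; exact div_mul_cancel₀ _ (by linarith)
      rw [hexp]; linear_combination -hsmul
    have hwT2 : w ∈ T2 v := (T2_iff hv0 w).2 ⟨hwS, le_of_eq hLw⟩
    have hdist : dist y w ≤ ε := by
      have hyw : y - w = s • (y - pt 0 3) := by
        rw [hwdef, smul_sub, sub_smul, one_smul]; abel
      rw [dist_eq_norm, hyw, norm_smul, Real.norm_eq_abs, abs_of_nonneg hs0]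
      have hnorm : ‖y - pt 0 3‖ ≤ 5 := by
        apply norm_sub_le5 hy <;> simp [pt_app0, pt_app1] <;> norm_num
      have hsmall : s ≤ ε/5 := by
        rw [hsdef, div_le_div_iff₀ (by linarith) (by norm_num)]
        nlinarith [mul_nonneg hε.le hL0.le]
      nlinarith [norm_nonneg (y - pt 0 3)]
    exact Metric.mem_cthickening_of_dist_le y w ε _ hwT2 hdist

lemma notK1 {v : E2} {ε : ℝ} (hε : 0 < ε) (hv0 : 1 < v 0) (hv11 : 1 < v 1)
    {y : E2} (hy : y ∈ SPD) (h : y ∉ K1 v ε) :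
    lfun v y < -(ε * (2*(v 1 - 1) + (v 0 - 1))/5) ∨ y 0 < 1 ∨ v 1 < y 1 := by
  by_contra hc
  push_neg at hc
  exact h (mem_K1_of hε hv0 hv11 hy hc.1 hc.2.1 hc.2.2)

lemma notK2 {v : E2} {ε : ℝ} (hε : 0 < ε) (hv0 : 1 < v 0) (hv11 : 1 < v 1)
    {y : E2} (hy : y ∈ SPD) (h : y ∉ K2 v ε) :
    ε * ((v 1 - 1) + 2*(v 0 - 1))/5 < lfun v y ∨ v 0 < y 0 ∨ y 1 < 1 := by
  by_contra hc
  push_neg at hc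
  exact h (mem_K2_of hε hv0 hv11 hy hc.1 hc.2.1 hc.2.2)

lemma mu1_pos {v : E2} {ε : ℝ} (hε : 0 < ε) (hv0 : 1 < v 0) (hv11 : 1 < v 1) :
    0 < ε * (2*(v 1 - 1) + (v 0 - 1))/5 := by
  have : 0 < 2*(v 1 - 1) + (v 0 - 1) := by linarith
  positivity

lemma mu2_pos {v : E2} {ε : ℝ} (hε : 0 < ε) (hv0 : 1 < v 0) (hv11 : 1 < v 1) :
    0 < ε * ((v 1 - 1) + 2*(v 0 - 1))/5 := by
  have : 0 < (v 1 - 1) + 2*(v 0 - 1) := by linarith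
  positivity

lemma lfun_neg_of_x0 {v : E2} (hv0 : 1 < v 0) (hv11 : 1 < v 1) {y : E2} (hy : y ∈ SPD)
    (h : y 0 < 1) : lfun v y < 0 := by
  obtain ⟨h1, _, _, _⟩ := spd_bounds hy
  simp only [lfun]
  nlinarith [mul_pos (show (0:ℝ) < v 1 - 1 by linarith) (show (0:ℝ) < 1 - y 0 by linarith),
    mul_pos (show (0:ℝ) < v 0 - 1 by linarith) (show (0:ℝ) < 1 - y 0 by linarith)]

lemma lfun_pos_of_x1 {v : E2} (hv0 : 1 < v 0) (hv11 : 1 < v 1) {y : E2} (hy : y ∈ SPD)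
    (h : y 1 < 1) : 0 < lfun v y := by
  obtain ⟨_, _, h3, _⟩ := spd_bounds hy
  simp only [lfun]
  nlinarith [mul_pos (show (0:ℝ) < v 1 - 1 by linarith) (show (0:ℝ) < 1 - y 1 by linarith),
    mul_pos (show (0:ℝ) < v 0 - 1 by linarith) (show (0:ℝ) < 1 - y 1 by linarith)]

lemma both_not {v : E2} {ε₁ ε₂ : ℝ} (hε₁ : 0 < ε₁) (hε₂ : 0 < ε₂)
    (hv0 : 1 < v 0) (hv11 : 1 < v 1) {y : E2} (hy : y ∈ SPD)
    (h1 : y ∉ K1 v ε₁) (h2 : y ∉ K2 v ε₂) : v 0 < y 0 ∧ v 1 < y 1 := by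
  have hm1 := mu1_pos hε₁ hv0 hv11
  have hm2 := mu2_pos hε₂ hv0 hv11
  rcases notK1 hε₁ hv0 hv11 hy h1 with hA | hA | hA <;>
    rcases notK2 hε₂ hv0 hv11 hy h2 with hB | hB | hB
  · exfalso; simp only [lfun] at hA hB; linarith
  · refine ⟨hB, ?_⟩
    simp only [lfun] at hA
    nlinarith [mul_pos (show (0:ℝ) < v 1 - 1 by linarith) (show (0:ℝ) < y 0 - v 0 by linarith)]
  · exfalso; have := lfun_pos_of_x1 hv0 hv11 hy hB; linarith
  · exfalso; have := lfun_neg_of_x0 hv0 hv11 hy hA; linarith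
  · exfalso; linarith
  · exfalso; have := lfun_neg_of_x0 hv0 hv11 hy hA; have := lfun_pos_of_x1 hv0 hv11 hy hB; linarith
  · refine ⟨?_, hA⟩
    simp only [lfun] at hB
    nlinarith [mul_pos (show (0:ℝ) < v 0 - 1 by linarith) (show (0:ℝ) < y 1 - v 1 by linarith)]
  · exact ⟨hB, hA⟩
  · exfalso; linarith

/-- If player 1 cooperates and player 2 defects, the state is strictly below the line. -/
lemma lfun_pos_of_K1_notK2 {v : E2} {ε₁ ε₂ : ℝ} (hε₁ : 0 < ε₁) (hε₂ : 0 < ε₂)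
    (hv0 : 1 < v 0) (hv11 : 1 < v 1) {y : E2}
    (h1 : y ∈ K1 v ε₁) (h2 : y ∉ K2 v ε₂) : 0 < lfun v y := by
  obtain ⟨_, hy, hb0, hb1⟩ := h1
  have hm2 := mu2_pos hε₂ hv0 hv11
  rcases notK2 hε₂ hv0 hv11 hy h2 with hB | hB | hB
  · linarith
  · simp only [lfun]
    nlinarith [mul_pos (show (0:ℝ) < v 1 - 1 by linarith) (show (0:ℝ) < y 0 - v 0 by linarith)]
  · exact lfun_pos_of_x1 hv0 hv11 hy hB

/-- If player 2 cooperates and player 1 defects, the state is strictly above the line. -/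
lemma lfun_neg_of_notK1_K2 {v : E2} {ε₁ ε₂ : ℝ} (hε₁ : 0 < ε₁) (hε₂ : 0 < ε₂)
    (hv0 : 1 < v 0) (hv11 : 1 < v 1) {y : E2}
    (h1 : y ∉ K1 v ε₁) (h2 : y ∈ K2 v ε₂) : lfun v y < 0 := by
  obtain ⟨_, hy, hb0, hb1⟩ := h2
  have hm1 := mu1_pos hε₁ hv0 hv11
  rcases notK1 hε₁ hv0 hv11 hy h1 with hA | hA | hA
  · linarith
  · exact lfun_neg_of_x0 hv0 hv11 hy hA
  · simp only [lfun]
    nlinarith [mul_pos (show (0:ℝ) < v 0 - 1 by linarith) (show (0:ℝ) < y 1 - v 1 by linarith)]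

lemma f_split (v : E2) (ε₁ ε₂ : ℝ) (y : E2) :
    (y ∈ K1 v ε₁ ∧ y ∈ K2 v ε₂ ∧ payoffPD (semi1 v ε₁ y) (semi2 v ε₂ y) = pt 2 2)
    ∨ (y ∈ K1 v ε₁ ∧ y ∉ K2 v ε₂ ∧ payoffPD (semi1 v ε₁ y) (semi2 v ε₂ y) = pt 0 3)
    ∨ (y ∉ K1 v ε₁ ∧ y ∈ K2 v ε₂ ∧ payoffPD (semi1 v ε₁ y) (semi2 v ε₂ y) = pt 3 0)
    ∨ (y ∉ K1 v ε₁ ∧ y ∉ K2 v ε₂ ∧ payoffPD (semi1 v ε₁ y) (semi2 v ε₂ y) = pt 1 1) := by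
  by_cases h1 : y ∈ K1 v ε₁ <;> by_cases h2 : y ∈ K2 v ε₂ <;>
    simp [semi1, semi2, h1, h2, payoffPD]

end SCaux

namespace SCaux

open Topology

/-- One-dimensional Blackwell-type approachability bound. -/
lemma bw (y z : ℕ → ℝ) (θ M : ℝ)
    (hrec : ∀ t : ℕ, 1 ≤ t → y (t+1) = ((t:ℝ)+1)⁻¹ * ((t:ℝ) * y t + z t))
    (hM : ∀ t : ℕ, 1 ≤ t → z t ≤ M)
    (hθ : ∀ t : ℕ, 1 ≤ t → θ < y t → z t ≤ θ) :
    ∃ K : ℝ, 0 ≤ K ∧ ∀ t : ℕ, 1 ≤ t → y t ≤ θ + K / t := by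
  refine ⟨max (max (y 1 - θ) (M - θ)) 0, le_max_right _ _, ?_⟩
  set K := max (max (y 1 - θ) (M - θ)) 0 with hK
  have main : ∀ t : ℕ, 1 ≤ t → (t:ℝ) * (y t - θ) ≤ K := by
    intro t ht
    induction t, ht using Nat.le_induction with
    | base =>
      simp only [Nat.cast_one, one_mul]
      exact le_trans (le_max_left _ _) (le_max_left _ _)
    | succ t ht ih =>
      have htpos : (0:ℝ) < (t:ℝ) := by exact_mod_cast ht
      have hne : ((t:ℝ)+1) ≠ 0 := by positivity
      have h1 : ((t:ℝ)+1) * y (t+1) = (t:ℝ) * y t + z t := by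
        rw [hrec t ht, ← mul_assoc, mul_inv_cancel₀ hne, one_mul]
      have hcast : ((t+1:ℕ):ℝ) = (t:ℝ)+1 := by push_cast; ring
      rw [hcast]
      have hexp : ((t:ℝ)+1) * (y (t+1) - θ) = (t:ℝ)*(y t - θ) + (z t - θ) := by
        rw [mul_sub, h1]; ring
      rw [hexp]
      by_cases hc : θ < y t
      · have := hθ t ht hc
        linarith
      · push_neg at hc
        have h2 : (t:ℝ)*(y t - θ) ≤ 0 := mul_nonpos_of_nonneg_of_nonpos htpos.le (by linarith)
        have h3 : z t - θ ≤ M - θ := by have := hM t ht; linarith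
        have h4 : M - θ ≤ K := le_trans (le_max_right _ _) (le_max_left _ _)
        linarith
  intro t ht
  have htpos : (0:ℝ) < (t:ℝ) := by exact_mod_cast ht
  have hmain := main t ht
  have h5 : y t - θ ≤ K / t := by
    rw [le_div_iff₀ htpos]
    nlinarith
  linarith

set_option maxHeartbeats 2000000 in
/-- The core convergence argument, in normalized coordinates where the target
`(a,b)` lies on the edge `q + p/2 = 3`, with `1 < a ≤ 2`, `b = 3 - a/2`. -/
lemma core (a b μ : ℝ) (ha : 1 < a) (ha2 : a ≤ 2) (hb : b = 3 - a/2) (hμ : 0 < μ)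
    (p q P Q : ℕ → ℝ)
    (hrecp : ∀ t : ℕ, 1 ≤ t → p (t+1) = ((t:ℝ)+1)⁻¹ * ((t:ℝ) * p t + P t))
    (hrecq : ∀ t : ℕ, 1 ≤ t → q (t+1) = ((t:ℝ)+1)⁻¹ * ((t:ℝ) * q t + Q t))
    (hS : ∀ t : ℕ, 1 ≤ t → 3/2 ≤ p t + q t/2 ∧ p t + q t/2 ≤ 3 ∧
        3/2 ≤ q t + p t/2 ∧ q t + p t/2 ≤ 3)
    (hC1 : ∀ t : ℕ, 1 ≤ t → (P t = 2 ∧ Q t = 2) ∨ (P t = 0 ∧ Q t = 3) ∨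
        (P t = 3 ∧ Q t = 0) ∨ (P t = 1 ∧ Q t = 1))
    (hC2 : ∀ t : ℕ, 1 ≤ t → a < p t → P t ≤ 1)
    (hC3 : ∀ t : ℕ, 1 ≤ t → b < q t → Q t ≤ 1)
    (hC6 : ∀ t : ℕ, 1 ≤ t → P t = 0 → 0 < (b-1)*(p t - 1) - (a-1)*(q t - 1))
    (hC8 : ∀ t : ℕ, 1 ≤ t → P t = 1 → a < p t ∧ b < q t)
    (hC9 : ∀ t : ℕ, 1 ≤ t → Q t ≤ 1 →
        ((b-1)*(p t - 1) - (a-1)*(q t - 1) < -μ ∨ p t < 1 ∨ b < q t)) :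
    Tendsto p atTop (𝓝 a) ∧ Tendsto q atTop (𝓝 b) := by
  have hb2 : (2:ℝ) ≤ b := by rw [hb]; linarith
  have hb1 : 1 < b := by linarith
  have hb3 : b ≤ 5/2 := by rw [hb]; linarith
  set L : ℕ → ℝ := fun t => (b-1)*(p t - 1) - (a-1)*(q t - 1) with hLdef
  set Λ : ℕ → ℝ := fun t => (b-1)*(P t - 1) - (a-1)*(Q t - 1) with hΛdef
  have hrecL : ∀ t : ℕ, 1 ≤ t → L (t+1) = ((t:ℝ)+1)⁻¹ * ((t:ℝ) * L t + Λ t) := by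
    intro t ht
    have hne : ((t:ℝ)+1) ≠ 0 := by positivity
    simp only [hLdef, hΛdef]
    rw [hrecp t ht, hrecq t ht]
    field_simp
    ring
  clear_value L Λ
  -- Blackwell bounds
  obtain ⟨Ka, hKa0, hKa⟩ := bw p P a 3 hrecp
    (fun t ht => by rcases hC1 t ht with ⟨h,_⟩|⟨h,_⟩|⟨h,_⟩|⟨h,_⟩ <;> rw [h] <;> norm_num)
    (fun t ht h => le_trans (hC2 t ht h) (by linarith))
  obtain ⟨Kb, hKb0, hKb⟩ := bw q Q b 3 hrecq
    (fun t ht => by rcases hC1 t ht with ⟨_,h⟩|⟨_,h⟩|⟨_,h⟩|⟨_,h⟩ <;> rw [h] <;> norm_num)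
    (fun t ht h => le_trans (hC3 t ht h) (by linarith))
  obtain ⟨Ke, hKe0, hKe⟩ := bw (fun t => -(L t)) (fun t => -(Λ t)) 0 10
    (fun t ht => by
      show -(L (t+1)) = ((t:ℝ)+1)⁻¹ * ((t:ℝ) * -(L t) + -(Λ t))
      rw [hrecL t ht]; ring)
    (fun t ht => by
      show -(Λ t) ≤ 10
      simp only [hΛdef]
      rcases hC1 t ht with ⟨h1,h2⟩|⟨h1,h2⟩|⟨h1,h2⟩|⟨h1,h2⟩ <;> rw [h1, h2] <;> ring_nf <;> linarith)
    (fun t ht h => by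
      have hL0 : (0:ℝ) < -(L t) := h
      show -(Λ t) ≤ 0
      simp only [hΛdef]
      rcases hC1 t ht with ⟨h1,h2⟩|⟨h1,h2⟩|⟨h1,h2⟩|⟨h1,h2⟩
      · rw [h1, h2]; ring_nf; linarith
      · exfalso
        have := hC6 t ht h1
        simp only [hLdef] at hL0
        linarith
      · rw [h1, h2]; ring_nf; linarith
      · rw [h1, h2]; ring_nf; linarith)
  obtain ⟨Kf, hKf0, hKf⟩ := bw (fun t => -(p t + q t)) (fun t => -(P t + Q t)) (-3) 0
    (fun t ht => by
      show -(p (t+1) + q (t+1)) = ((t:ℝ)+1)⁻¹ * ((t:ℝ) * -(p t + q t) + -(P t + Q t))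
      rw [hrecp t ht, hrecq t ht]; ring)
    (fun t ht => by
      show -(P t + Q t) ≤ 0
      rcases hC1 t ht with ⟨h1,h2⟩|⟨h1,h2⟩|⟨h1,h2⟩|⟨h1,h2⟩ <;> rw [h1, h2] <;> norm_num)
    (fun t ht h => by
      have h' : (-3:ℝ) < -(p t + q t) := h
      show -(P t + Q t) ≤ -3
      rcases hC1 t ht with ⟨h1,h2⟩|⟨h1,h2⟩|⟨h1,h2⟩|⟨h1,h2⟩
      · rw [h1, h2]; norm_num
      · rw [h1, h2]; norm_num
      · rw [h1, h2]; norm_num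
      · exfalso
        obtain ⟨hp, hq⟩ := hC8 t ht h1
        linarith)
  -- the edge functional
  set e : ℕ → ℝ := fun t => q t + p t / 2 with hedef
  have hrece : ∀ t : ℕ, 1 ≤ t → e (t+1) = ((t:ℝ)+1)⁻¹ * ((t:ℝ) * e t + (Q t + P t / 2)) := by
    intro t ht
    have hne : ((t:ℝ)+1) ≠ 0 := by positivity
    simp only [hedef]
    rw [hrecp t ht, hrecq t ht]
    field_simp
    ring
  clear_value e
  set C2 : ℝ := Ke / (2*(b-1)) with hC2def
  clear_value C2
  have hC2pos : 0 ≤ C2 := by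
    rw [hC2def]; exact div_nonneg hKe0 (by linarith)
  obtain ⟨T0, hT0⟩ := exists_nat_gt (max (Ke/μ) (Kf + Ke/(a-1)) + 1)
  have hT0max : max (Ke/μ) (Kf + Ke/(a-1)) + 1 < (T0:ℝ) := hT0
  have hT0one : 1 ≤ T0 := by
    by_contra hc
    push_neg at hc
    have h0 : T0 = 0 := by omega
    subst h0
    have h1 : 0 ≤ Ke/μ := div_nonneg hKe0 hμ.le
    have h2 : Ke/μ ≤ max (Ke/μ) (Kf + Ke/(a-1)) := le_max_left _ _
    simp only [Nat.cast_zero] at hT0max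
    linarith
  -- at large bad times, e is already nearly 3
  have hbad : ∀ t : ℕ, T0 ≤ t → Q t ≤ 1 → 3 - e t < C2 / t := by
    intro t ht hQ
    have ht1 : 1 ≤ t := le_trans hT0one ht
    have htpos : (0:ℝ) < (t:ℝ) := by exact_mod_cast ht1
    have hne : (t:ℝ) ≠ 0 := ne_of_gt htpos
    have htT0 : (T0:ℝ) ≤ (t:ℝ) := by exact_mod_cast ht
    have hLlow : -(L t) ≤ Ke / t := by simpa using hKe t ht1
    rcases hC9 t ht1 hQ with h | h | h
    · exfalso
      have h2 : Ke/μ < (t:ℝ) := by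
        calc Ke/μ ≤ max (Ke/μ) (Kf + Ke/(a-1)) := le_max_left _ _
          _ < (T0:ℝ) := by linarith
          _ ≤ (t:ℝ) := htT0
      have h3 : Ke/μ * μ = Ke := div_mul_cancel₀ _ (ne_of_gt hμ)
      have h1 : Ke / t < μ := by
        rw [div_lt_iff₀ htpos]
        linarith [mul_lt_mul_of_pos_right h2 hμ]
      simp only [hLdef] at hLlow h
      linarith
    · exfalso
      have hσ : -(p t + q t) ≤ -3 + Kf / t := by simpa using hKf t ht1
      have hq1 : (a-1) * (q t - 1) ≤ Ke / t := by
        simp only [hLdef] at hLlow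
        linarith [mul_pos (show (0:ℝ) < b - 1 by linarith)
          (show (0:ℝ) < 1 - p t by linarith)]
      have hqgt : 1 - Kf/(t:ℝ) < q t - 1 := by linarith
      have h4 : (a-1) * (1 - Kf/t) < Ke/t :=
        lt_of_lt_of_le (mul_lt_mul_of_pos_left hqgt (show (0:ℝ) < a-1 by linarith)) hq1
      have e1 : Kf/(t:ℝ) * t = Kf := div_mul_cancel₀ _ hne
      have e2 : Ke/(t:ℝ) * t = Ke := div_mul_cancel₀ _ hne
      have h5 : (a-1) * (t:ℝ) < Ke + (a-1)*Kf := by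
        have hmul := mul_lt_mul_of_pos_right h4 htpos
        have hexp : ((a-1) * (1 - Kf/(t:ℝ))) * t = (a-1)*(t:ℝ) - (a-1)*(Kf/(t:ℝ)*t) := by
          ring
        rw [hexp, e1, e2] at hmul
        linarith
      have ha1 : (0:ℝ) < a - 1 := by linarith
      have e3 : Ke/(a-1) * (a-1) = Ke := div_mul_cancel₀ _ (ne_of_gt ha1)
      have ht2 : (t:ℝ) < Kf + Ke/(a-1) := by
        rw [show Kf + Ke/(a-1) = ((a-1)*Kf + Ke/(a-1)*(a-1))/(a-1) by field_simp,
          lt_div_iff₀ ha1, e3]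
        linarith [mul_comm (t:ℝ) (a-1)]
      have : Kf + Ke/(a-1) < (t:ℝ) := by
        calc Kf + Ke/(a-1) ≤ max (Ke/μ) (Kf + Ke/(a-1)) := le_max_right _ _
          _ < (T0:ℝ) := by linarith
          _ ≤ (t:ℝ) := htT0
      linarith
    · -- q t > b
      have hgoal : 3 - e t < (Ke/t) / (2*(b-1)) := by
        rw [lt_div_iff₀ (by linarith : (0:ℝ) < 2*(b-1))]
        simp only [hLdef] at hLlow
        simp only [hedef]
        have hq2 := mul_lt_mul_of_pos_left h (show (0:ℝ) < 2*(b-1)+(a-1) by linarith)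
        have key : (2*(b-1)+(a-1))*b = 5*(b-1) + (a-1) := by rw [hb]; ring
        nlinarith [hq2, key, hLlow]
      have heq : C2 / t = (Ke/t) / (2*(b-1)) := by
        rw [hC2def]; ring
      rw [heq]
      exact hgoal
  -- final induction : t * (3 - e t) bounded from T0 on
  set Ke2 : ℝ := max ((T0:ℝ) * (3 - e T0)) (C2 + 3/2) with hKe2def
  clear_value Ke2
  have he : ∀ t : ℕ, T0 ≤ t → (t:ℝ) * (3 - e t) ≤ Ke2 := by
    intro t ht
    induction t, ht using Nat.le_induction with
    | base => rw [hKe2def]; exact le_max_left _ _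
    | succ t ht ih =>
      have ht1 : 1 ≤ t := le_trans hT0one ht
      have htpos : (0:ℝ) < (t:ℝ) := by exact_mod_cast ht1
      have hne : ((t:ℝ)+1) ≠ 0 := by positivity
      have hcast : ((t+1:ℕ):ℝ) = (t:ℝ)+1 := by push_cast; ring
      have hid : ((t:ℝ)+1) * (3 - e (t+1)) = (t:ℝ)*(3 - e t) + (3 - (Q t + P t/2)) := by
        rw [hrece t ht1, mul_sub, ← mul_assoc, mul_inv_cancel₀ hne, one_mul]
        ring
      rw [hcast, hid]
      have hmax2 : C2 + 3/2 ≤ Ke2 := by rw [hKe2def]; exact le_max_right _ _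
      rcases hC1 t ht1 with ⟨h1,h2⟩|⟨h1,h2⟩|⟨h1,h2⟩|⟨h1,h2⟩
      · rw [h1, h2]; linarith
      · rw [h1, h2]; linarith
      · have hQ1 : Q t ≤ 1 := by rw [h2]; norm_num
        have hb1t := hbad t ht hQ1
        have h3 : (t:ℝ) * (3 - e t) < C2 := by
          have := mul_lt_mul_of_pos_left hb1t htpos
          rwa [mul_div_cancel₀ _ (ne_of_gt htpos)] at this
        rw [h1, h2]
        linarith
      · have hQ1 : Q t ≤ 1 := by rw [h2]
        have hb1t := hbad t ht hQ1
        have h3 : (t:ℝ) * (3 - e t) < C2 := by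
          have := mul_lt_mul_of_pos_left hb1t htpos
          rwa [mul_div_cancel₀ _ (ne_of_gt htpos)] at this
        rw [h1, h2]
        linarith
  have hebound : ∀ t : ℕ, T0 ≤ t → 3 - e t ≤ Ke2 / t := by
    intro t ht
    have ht1 : 1 ≤ t := le_trans hT0one ht
    have htpos : (0:ℝ) < (t:ℝ) := by exact_mod_cast ht1
    rw [le_div_iff₀ htpos]
    linarith [he t ht, mul_comm (3 - e t) (t:ℝ)]
  constructor
  · apply tendsto_of_tendsto_of_tendsto_of_le_of_le'
      (show Tendsto (fun t : ℕ => a - (2*Ke2 + 2*Kb) / t) atTop (𝓝 a) by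
        have h1 := tendsto_const_div_atTop_nhds_zero_nat (2*Ke2 + 2*Kb)
        have h2 := (tendsto_const_nhds (x := a) (f := (atTop : Filter ℕ))).sub h1
        simpa using h2)
      (show Tendsto (fun t : ℕ => a + Ka / t) atTop (𝓝 a) by
        have h1 := tendsto_const_div_atTop_nhds_zero_nat Ka
        have h2 := (tendsto_const_nhds (x := a) (f := (atTop : Filter ℕ))).add h1
        simpa using h2)
    · filter_upwards [eventually_ge_atTop T0] with t ht
      have ht1 : 1 ≤ t := le_trans hT0one ht
      have h1 := hebound t ht
      have h2 := hKb t ht1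
      simp only [hedef] at h1
      have h3 : (2*Ke2 + 2*Kb)/(t:ℝ) = 2*(Ke2/t) + 2*(Kb/t) := by ring
      rw [h3]
      linarith
    · filter_upwards [eventually_ge_atTop T0] with t ht
      exact hKa t (le_trans hT0one ht)
  · apply tendsto_of_tendsto_of_tendsto_of_le_of_le'
      (show Tendsto (fun t : ℕ => b - (Ke2 + Ka/2) / t) atTop (𝓝 b) by
        have h1 := tendsto_const_div_atTop_nhds_zero_nat (Ke2 + Ka/2)
        have h2 := (tendsto_const_nhds (x := b) (f := (atTop : Filter ℕ))).sub h1
        simpa using h2)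
      (show Tendsto (fun t : ℕ => b + Kb / t) atTop (𝓝 b) by
        have h1 := tendsto_const_div_atTop_nhds_zero_nat Kb
        have h2 := (tendsto_const_nhds (x := b) (f := (atTop : Filter ℕ))).add h1
        simpa using h2)
    · filter_upwards [eventually_ge_atTop T0] with t ht
      have ht1 : 1 ≤ t := le_trans hT0one ht
      have h1 := hebound t ht
      have h2 := hKa t ht1
      simp only [hedef] at h1
      have h3 : (Ke2 + Ka/2)/(t:ℝ) = Ke2/t + (Ka/t)/2 := by ring
      rw [h3]
      linarith
    · filter_upwards [eventually_ge_atTop T0] with t ht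
      exact hKb t (le_trans hT0one ht)

end SCaux

open Topology

set_option maxHeartbeats 2000000

/-- Theorem 4.1, first part: if both players play semi-cooperative strategies
determined by the same point v of the β-core (minus its endpoints), then every
trajectory of average payoffs, from any initial point in 𝔖, converges to v. -/
theorem stmt10 (v : E2) (hv : v ∈ BPD) (hv1 : v ≠ pt 1 (5 / 2)) (hv2 : v ≠ pt (5 / 2) 1)
    (ε₁ ε₂ : ℝ) (hε₁ : 0 < ε₁) (hε₂ : 0 < ε₂) (x : ℕ → E2)
    (hx : IsTrajPD (fun p => payoffPD (semi1 v ε₁ p) (semi2 v ε₂ p)) x) :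
    Tendsto x atTop (nhds v) := by

  classical
  have hxm : ∀ t : ℕ, 1 ≤ t → x t ∈ SPD :=
    SCaux.traj_mem _ (fun y => SCaux.payoff_mem _ _) x hx
  have hrec0 : ∀ t : ℕ, 1 ≤ t →
      x (t+1) 0 = ((t:ℝ)+1)⁻¹ * ((t:ℝ) * x t 0
        + payoffPD (semi1 v ε₁ (x t)) (semi2 v ε₂ (x t)) 0) := by
    intro t ht
    rw [hx.2 t ht]
    simp [PiLp.smul_apply, PiLp.add_apply, smul_eq_mul]
    ring
  have hrec1 : ∀ t : ℕ, 1 ≤ t →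
      x (t+1) 1 = ((t:ℝ)+1)⁻¹ * ((t:ℝ) * x t 1
        + payoffPD (semi1 v ε₁ (x t)) (semi2 v ε₂ (x t)) 1) := by
    intro t ht
    rw [hx.2 t ht]
    simp [PiLp.smul_apply, PiLp.add_apply, smul_eq_mul]
    ring
  have hbranch : (1 < v 0 ∧ 1 < v 1) ∧
      ((v 1 = 3 - v 0/2 ∧ v 0 ≤ 2) ∨ (v 0 = 3 - v 1/2 ∧ v 1 ≤ 2)) := by
    rcases hv with h | h
    · obtain ⟨c, hc1, hc2, hveq⟩ := h
      have hc1' : 1 < c := by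
        rcases lt_or_eq_of_le hc1 with h' | h'
        · exact h'
        · exfalso; apply hv1; rw [hveq, ← h']; norm_num
      subst hveq
      simp only [SCaux.pt_app0, SCaux.pt_app1]
      exact ⟨⟨hc1', by linarith⟩, Or.inl ⟨trivial, hc2⟩⟩
    · obtain ⟨c, hc1, hc2, hveq⟩ := h
      have hc1' : 1 < c := by
        rcases lt_or_eq_of_le hc1 with h' | h'
        · exact h'
        · exfalso; apply hv2; rw [hveq, ← h']; norm_num
      subst hveq
      simp only [SCaux.pt_app0, SCaux.pt_app1]
      exact ⟨⟨by linarith, hc1'⟩, Or.inr ⟨trivial, hc2⟩⟩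
  obtain ⟨⟨hv0, hv11⟩, hbr⟩ := hbranch
  have key : Tendsto (fun t => x t 0) atTop (𝓝 (v 0))
      ∧ Tendsto (fun t => x t 1) atTop (𝓝 (v 1)) := by
    rcases hbr with ⟨hbeq, hale⟩ | ⟨hbeq, hale⟩
    · -- branch 1 : v on the edge x1 + x0/2 = 3 ; player 1's cooperation controls the edge
      apply SCaux.core (v 0) (v 1) (ε₁ * (2*(v 1 - 1) + (v 0 - 1))/5) hv0 hale hbeq
        (SCaux.mu1_pos hε₁ hv0 hv11)
        (fun t => x t 0) (fun t => x t 1)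
        (fun t => payoffPD (semi1 v ε₁ (x t)) (semi2 v ε₂ (x t)) 0)
        (fun t => payoffPD (semi1 v ε₁ (x t)) (semi2 v ε₂ (x t)) 1)
        hrec0 hrec1 (fun t ht => SCaux.spd_bounds (hxm t ht))
      · -- hC1
        intro t ht
        rcases SCaux.f_split v ε₁ ε₂ (x t) with ⟨_,_,hf⟩|⟨_,_,hf⟩|⟨_,_,hf⟩|⟨_,_,hf⟩ <;>
          simp only [hf] <;> simp [SCaux.pt_app0, SCaux.pt_app1]
      · -- hC2 : x0 beyond v0 forces player 2 to defect
        intro t ht h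
        rcases SCaux.f_split v ε₁ ε₂ (x t) with ⟨h1,h2,hf⟩|⟨h1,h2,hf⟩|⟨h1,h2,hf⟩|⟨h1,h2,hf⟩
        · exfalso; obtain ⟨_, _, hK20, _⟩ := h2; linarith
        · simp only [hf]; norm_num [SCaux.pt_app0]
        · exfalso; obtain ⟨_, _, hK20, _⟩ := h2; linarith
        · simp only [hf]; norm_num [SCaux.pt_app0]
      · -- hC3 : x1 beyond v1 forces player 1 to defect
        intro t ht h
        rcases SCaux.f_split v ε₁ ε₂ (x t) with ⟨h1,h2,hf⟩|⟨h1,h2,hf⟩|⟨h1,h2,hf⟩|⟨h1,h2,hf⟩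
        · exfalso; obtain ⟨_, _, _, hK11⟩ := h1; linarith
        · exfalso; obtain ⟨_, _, _, hK11⟩ := h1; linarith
        · simp only [hf]; norm_num [SCaux.pt_app1]
        · simp only [hf]; norm_num [SCaux.pt_app1]
      · -- hC6 : payoff (0,3) means strictly below the line
        intro t ht hP
        rcases SCaux.f_split v ε₁ ε₂ (x t) with ⟨h1,h2,hf⟩|⟨h1,h2,hf⟩|⟨h1,h2,hf⟩|⟨h1,h2,hf⟩
        · simp only [hf] at hP; norm_num [SCaux.pt_app0] at hP
        · have := SCaux.lfun_pos_of_K1_notK2 hε₁ hε₂ hv0 hv11 h1 h2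
          simpa [SCaux.lfun] using this
        · simp only [hf] at hP; norm_num [SCaux.pt_app0] at hP
        · simp only [hf] at hP; norm_num [SCaux.pt_app0] at hP
      · -- hC8 : payoff (1,1) means both defect, i.e. beyond v in both coordinates
        intro t ht hP
        rcases SCaux.f_split v ε₁ ε₂ (x t) with ⟨h1,h2,hf⟩|⟨h1,h2,hf⟩|⟨h1,h2,hf⟩|⟨h1,h2,hf⟩
        · simp only [hf] at hP; norm_num [SCaux.pt_app0] at hP
        · simp only [hf] at hP; norm_num [SCaux.pt_app0] at hP
        · simp only [hf] at hP; norm_num [SCaux.pt_app0] at hP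
        · exact SCaux.both_not hε₁ hε₂ hv0 hv11 (hxm t ht) h1 h2
      · -- hC9 : player 1 defects only outside K1
        intro t ht hQ
        rcases SCaux.f_split v ε₁ ε₂ (x t) with ⟨h1,h2,hf⟩|⟨h1,h2,hf⟩|⟨h1,h2,hf⟩|⟨h1,h2,hf⟩
        · exfalso; simp only [hf] at hQ; norm_num [SCaux.pt_app1] at hQ
        · exfalso; simp only [hf] at hQ; norm_num [SCaux.pt_app1] at hQ
        · rcases SCaux.notK1 hε₁ hv0 hv11 (hxm t ht) h1 with hc | hc | hc
          · exact Or.inl (by simpa [SCaux.lfun] using hc)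
          · exact Or.inr (Or.inl hc)
          · exact Or.inr (Or.inr hc)
        · rcases SCaux.notK1 hε₁ hv0 hv11 (hxm t ht) h1 with hc | hc | hc
          · exact Or.inl (by simpa [SCaux.lfun] using hc)
          · exact Or.inr (Or.inl hc)
          · exact Or.inr (Or.inr hc)
    · -- branch 2 : mirror image, with the roles of the players exchanged
      have h := SCaux.core (v 1) (v 0) (ε₂ * ((v 1 - 1) + 2*(v 0 - 1))/5) hv11 hale hbeq
        (SCaux.mu2_pos hε₂ hv0 hv11)
        (fun t => x t 1) (fun t => x t 0)
        (fun t => payoffPD (semi1 v ε₁ (x t)) (semi2 v ε₂ (x t)) 1)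
        (fun t => payoffPD (semi1 v ε₁ (x t)) (semi2 v ε₂ (x t)) 0)
        hrec1 hrec0
        (fun t ht => by
          obtain ⟨h1, h2, h3, h4⟩ := SCaux.spd_bounds (hxm t ht)
          exact ⟨h3, h4, h1, h2⟩)
        (by -- hC1
          intro t ht
          rcases SCaux.f_split v ε₁ ε₂ (x t) with ⟨_,_,hf⟩|⟨_,_,hf⟩|⟨_,_,hf⟩|⟨_,_,hf⟩ <;>
            simp only [hf] <;> simp [SCaux.pt_app0, SCaux.pt_app1])
        (by -- hC2
          intro t ht h'
          rcases SCaux.f_split v ε₁ ε₂ (x t) with ⟨h1,h2,hf⟩|⟨h1,h2,hf⟩|⟨h1,h2,hf⟩|⟨h1,h2,hf⟩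
          · exfalso; obtain ⟨_, _, _, hK11⟩ := h1; linarith
          · exfalso; obtain ⟨_, _, _, hK11⟩ := h1; linarith
          · simp only [hf]; norm_num [SCaux.pt_app1]
          · simp only [hf]; norm_num [SCaux.pt_app1])
        (by -- hC3
          intro t ht h'
          rcases SCaux.f_split v ε₁ ε₂ (x t) with ⟨h1,h2,hf⟩|⟨h1,h2,hf⟩|⟨h1,h2,hf⟩|⟨h1,h2,hf⟩
          · exfalso; obtain ⟨_, _, hK20, _⟩ := h2; linarith
          · simp only [hf]; norm_num [SCaux.pt_app0]
          · exfalso; obtain ⟨_, _, hK20, _⟩ := h2; linarith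
          · simp only [hf]; norm_num [SCaux.pt_app0])
        (by -- hC6
          intro t ht hP
          rcases SCaux.f_split v ε₁ ε₂ (x t) with ⟨h1,h2,hf⟩|⟨h1,h2,hf⟩|⟨h1,h2,hf⟩|⟨h1,h2,hf⟩
          · simp only [hf] at hP; norm_num [SCaux.pt_app1] at hP
          · simp only [hf] at hP; norm_num [SCaux.pt_app1] at hP
          · have := SCaux.lfun_neg_of_notK1_K2 hε₁ hε₂ hv0 hv11 h1 h2
            simp only [SCaux.lfun] at this
            linarith
          · simp only [hf] at hP; norm_num [SCaux.pt_app1] at hP)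
        (by -- hC8
          intro t ht hP
          rcases SCaux.f_split v ε₁ ε₂ (x t) with ⟨h1,h2,hf⟩|⟨h1,h2,hf⟩|⟨h1,h2,hf⟩|⟨h1,h2,hf⟩
          · simp only [hf] at hP; norm_num [SCaux.pt_app1] at hP
          · simp only [hf] at hP; norm_num [SCaux.pt_app1] at hP
          · simp only [hf] at hP; norm_num [SCaux.pt_app1] at hP
          · have := SCaux.both_not hε₁ hε₂ hv0 hv11 (hxm t ht) h1 h2
            exact ⟨this.2, this.1⟩)
        (by -- hC9
          intro t ht hQ
          rcases SCaux.f_split v ε₁ ε₂ (x t) with ⟨h1,h2,hf⟩|⟨h1,h2,hf⟩|⟨h1,h2,hf⟩|⟨h1,h2,hf⟩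
          · exfalso; simp only [hf] at hQ; norm_num [SCaux.pt_app0] at hQ
          · rcases SCaux.notK2 hε₂ hv0 hv11 (hxm t ht) h2 with hc | hc | hc
            · refine Or.inl ?_
              simp only [SCaux.lfun] at hc
              linarith
            · exact Or.inr (Or.inr hc)
            · exact Or.inr (Or.inl hc)
          · exfalso; simp only [hf] at hQ; norm_num [SCaux.pt_app0] at hQ
          · rcases SCaux.notK2 hε₂ hv0 hv11 (hxm t ht) h2 with hc | hc | hc
            · refine Or.inl ?_
              simp only [SCaux.lfun] at hc
              linarith
            · exact Or.inr (Or.inr hc)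
            · exact Or.inr (Or.inl hc))
      exact ⟨h.2, h.1⟩
  -- assemble the convergence of the vector sequence from its coordinates
  have hsub : ∀ t : ℕ, ‖x t - v‖ ≤ |x t 0 - v 0| + |x t 1 - v 1| := by
    intro t
    have h2 : ‖x t - v‖ = Real.sqrt ((x t 0 - v 0)^2 + (x t 1 - v 1)^2) := by
      rw [EuclideanSpace.norm_eq, Fin.sum_univ_two]
      simp [PiLp.sub_apply, Real.norm_eq_abs, sq_abs]
    rw [h2]
    have ha := abs_nonneg (x t 0 - v 0)
    have hb := abs_nonneg (x t 1 - v 1)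
    have h3 : (x t 0 - v 0)^2 + (x t 1 - v 1)^2 ≤ (|x t 0 - v 0| + |x t 1 - v 1|)^2 := by
      nlinarith [sq_abs (x t 0 - v 0), sq_abs (x t 1 - v 1), mul_nonneg ha hb]
    calc Real.sqrt ((x t 0 - v 0)^2 + (x t 1 - v 1)^2)
        ≤ Real.sqrt ((|x t 0 - v 0| + |x t 1 - v 1|)^2) := Real.sqrt_le_sqrt h3
      _ = |x t 0 - v 0| + |x t 1 - v 1| := Real.sqrt_sq (by positivity)
  have hz : Tendsto (fun t : ℕ => |x t 0 - v 0| + |x t 1 - v 1|) atTop (𝓝 0) := by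
    have h1 : Tendsto (fun t : ℕ => x t 0 - v 0) atTop (𝓝 0) := by
      simpa using key.1.sub (tendsto_const_nhds (x := v 0) (f := (atTop : Filter ℕ)))
    have h2 : Tendsto (fun t : ℕ => x t 1 - v 1) atTop (𝓝 0) := by
      simpa using key.2.sub (tendsto_const_nhds (x := v 1) (f := (atTop : Filter ℕ)))
    simpa using h1.abs.add h2.abs
  rw [tendsto_iff_norm_sub_tendsto_zero]
  exact squeeze_zero (fun t => norm_nonneg _) hsub hz
end

section
/- Let v ∈ B_PD \ {(1,2.5),(2.5,1)} and ε₁ > 0. If player 1 plays the semi-cooperative strategy s₁^{v,ε₁} and player 2 plays an arbitrary memory strategy s₂, then every trajectory (x̄_t)_{t≥1} = ((x̄¹_t, x̄²_t))_{t≥1} of the dynamical system induced by (s₁^{v,ε₁}, s₂), from any initial point in 𝔖, satisfies liminf_{t→∞} x̄¹_t ≥ 1 and limsup_{t→∞} x̄²_t ≤ v₂. -/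
open Filter

lemma payoff_mem_SPD (p q : Bool) : payoffPD p q ∈ SPD := by
  cases p <;> cases q <;>
    exact subset_convexHull ℝ _ (by simp [payoffPD])

lemma SPD_bounds {z : E2} (hz : z ∈ SPD) :
    0 ≤ z 0 ∧ z 0 ≤ 3 ∧ 0 ≤ z 1 ∧ z 1 ≤ 3 := by
  have hconv : Convex ℝ {w : E2 | 0 ≤ w 0 ∧ w 0 ≤ 3 ∧ 0 ≤ w 1 ∧ w 1 ≤ 3} := by
    intro a ha b hb s t hs ht hst
    obtain ⟨ha0, ha3, ha1, ha4⟩ := ha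
    obtain ⟨hb0, hb3, hb1, hb4⟩ := hb
    have e0 : (s • a + t • b) 0 = s * a 0 + t * b 0 := by simp
    have e1 : (s • a + t • b) 1 = s * a 1 + t * b 1 := by simp
    refine ⟨?_, ?_, ?_, ?_⟩
    · rw [e0]; nlinarith
    · rw [e0]; nlinarith
    · rw [e1]; nlinarith
    · rw [e1]; nlinarith
  have := convexHull_min (by
    intro w hw
    rcases hw with h | h | h | h <;> subst h <;>
      refine ⟨by norm_num [pt], by norm_num [pt], by norm_num [pt], by norm_num [pt]⟩) hconv hz
  exact this

lemma payoff_bounds (p q : Bool) :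
    0 ≤ payoffPD p q 0 ∧ payoffPD p q 0 ≤ 3 ∧ 0 ≤ payoffPD p q 1 ∧ payoffPD p q 1 ≤ 3 :=
  SPD_bounds (payoff_mem_SPD p q)

lemma payoff_defect0 (q : Bool) : 1 ≤ payoffPD false q 0 := by
  cases q <;> norm_num [payoffPD, pt]

lemma payoff_defect1 (q : Bool) : payoffPD false q 1 ≤ 1 := by
  cases q <;> norm_num [payoffPD, pt]

/-- Theorem 4.1, second part: if player 1 plays the semi-cooperative strategy
determined by v and ε₁ and player 2 plays an arbitrary memory strategy, then every
trajectory of average payoffs, from any initial point in 𝔖, satisfies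
liminf x̄¹_t ≥ 1 and limsup x̄²_t ≤ v₂. -/
theorem stmt11 (v : E2) (hv : v ∈ BPD) (hv1 : v ≠ pt 1 (5 / 2)) (hv2 : v ≠ pt (5 / 2) 1)
    (ε₁ : ℝ) (hε₁ : 0 < ε₁) (s₂ : E2 → Bool) (x : ℕ → E2)
    (hx : IsTrajPD (fun p => payoffPD (semi1 v ε₁ p) (s₂ p)) x) :
    1 ≤ liminf (fun t => x t 0) atTop ∧ limsup (fun t => x t 1) atTop ≤ v 1 := by
  obtain ⟨h1, hrec⟩ := hx
  have hv1ge : 1 ≤ v 1 := by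
    rcases hv with ⟨a, ha1, ha2, rfl⟩ | ⟨a, ha1, ha2, rfl⟩
    · have : pt a (3 - a / 2) 1 = 3 - a / 2 := rfl
      rw [this]; linarith
    · have : pt (3 - a / 2) a 1 = a := rfl
      rw [this]; linarith
  set f : E2 → E2 := fun p => payoffPD (semi1 v ε₁ p) (s₂ p) with hf
  have hfmem : ∀ p, f p ∈ SPD := fun p => payoff_mem_SPD _ _
  -- trajectory stays in SPD
  have hmem : ∀ t, 1 ≤ t → x t ∈ SPD := by
    intro t ht
    induction t, ht using Nat.le_induction with
    | base => exact h1
    | succ n hn ih =>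
      rw [hrec n hn]
      have hpos : (0:ℝ) < (n:ℝ) + 1 := by positivity
      have e : ((n:ℝ) + 1)⁻¹ • ((n:ℝ) • x n + f (x n)) =
          (((n:ℝ) + 1)⁻¹ * (n:ℝ)) • x n + ((n:ℝ) + 1)⁻¹ • f (x n) := by
        rw [smul_add, smul_smul]
      rw [e]
      refine (convex_convexHull ℝ _) ih (hfmem (x n)) (by positivity) (by positivity) ?_
      field_simp
  -- coordinate recursion
  have hcoord : ∀ t, 1 ≤ t → ∀ i : Fin 2,
      x (t + 1) i = ((t:ℝ) + 1)⁻¹ * ((t:ℝ) * x t i + f (x t) i) := by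
    intro t ht i
    rw [hrec t ht]
    simp
    ring
  -- Part A : t * (1 - x t 0) ≤ 1
  have hA : ∀ t : ℕ, 1 ≤ t → (t:ℝ) * (1 - x t 0) ≤ 1 := by
    intro t ht
    induction t, ht using Nat.le_induction with
    | base =>
      have := (SPD_bounds h1).1
      push_cast; nlinarith
    | succ n hn ih =>
      have key := hcoord n hn 0
      have hpos : (0:ℝ) < (n:ℝ) + 1 := by positivity
      set f0 := f (x n) 0 with hf0
      have e : ((n:ℝ) + 1) * (1 - ((n:ℝ) + 1)⁻¹ * ((n:ℝ) * x n 0 + f0)) =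
          (n:ℝ) * (1 - x n 0) + (1 - f0) := by
        field_simp; ring
      push_cast
      rw [key, e]
      by_cases hy : 1 ≤ x n 0
      · have hnn : (0:ℝ) ≤ f0 := (payoff_bounds _ _).1
        have : (n:ℝ) * (1 - x n 0) ≤ 0 := by
          have : 1 - x n 0 ≤ 0 := by linarith
          have hn0 : (0:ℝ) ≤ (n:ℝ) := by positivity
          nlinarith
        linarith
      · have hnk : x n ∉ K1 v ε₁ := by
          intro hk
          exact hy hk.2.2.1
        have hsemi : semi1 v ε₁ (x n) = false := by
          simp [semi1, hnk]
        have hge : 1 ≤ f0 := by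
          have e2 : f0 = payoffPD false (s₂ (x n)) 0 := by
            rw [hf0]; simp only [hf]; rw [hsemi]
          rw [e2]; exact payoff_defect0 _
        linarith
  -- Part B : t * (x t 1 - v 1) ≤ 3
  have hB : ∀ t : ℕ, 1 ≤ t → (t:ℝ) * (x t 1 - v 1) ≤ 3 := by
    intro t ht
    induction t, ht using Nat.le_induction with
    | base =>
      have := (SPD_bounds h1).2.2.2
      push_cast; nlinarith
    | succ n hn ih =>
      have key := hcoord n hn 1
      have hpos : (0:ℝ) < (n:ℝ) + 1 := by positivity
      set f1 := f (x n) 1 with hf1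
      have e : ((n:ℝ) + 1) * (((n:ℝ) + 1)⁻¹ * ((n:ℝ) * x n 1 + f1) - v 1) =
          (n:ℝ) * (x n 1 - v 1) + (f1 - v 1) := by
        field_simp; ring
      push_cast
      rw [key, e]
      by_cases hz : x n 1 ≤ v 1
      · have hle : f1 ≤ 3 := (payoff_bounds _ _).2.2.2
        have : (n:ℝ) * (x n 1 - v 1) ≤ 0 := by
          have hn0 : (0:ℝ) ≤ (n:ℝ) := by positivity
          nlinarith
        linarith
      · have hnk : x n ∉ K1 v ε₁ := by
          intro hk
          exact hz hk.2.2.2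
        have hsemi : semi1 v ε₁ (x n) = false := by
          simp [semi1, hnk]
        have hle : f1 ≤ 1 := by
          have e2 : f1 = payoffPD false (s₂ (x n)) 1 := by
            rw [hf1]; simp only [hf]; rw [hsemi]
          rw [e2]; exact payoff_defect1 _
        linarith
  constructor
  · -- liminf part
    have hub : ∀ᶠ t : ℕ in atTop, (1 : ℝ) - (t:ℝ)⁻¹ ≤ x t 0 := by
      filter_upwards [eventually_ge_atTop 1] with t ht
      have h := hA t ht
      have htpos : (0:ℝ) < (t:ℝ) := by exact_mod_cast ht
      have h2 : 1 - x t 0 ≤ 1 / (t:ℝ) := (le_div_iff₀ htpos).mpr (by linarith)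
      rw [one_div] at h2
      linarith
    have hlim : Tendsto (fun t : ℕ => (1:ℝ) - (t:ℝ)⁻¹) atTop (nhds 1) := by
      simpa using tendsto_const_nhds.sub (tendsto_inv_atTop_nhds_zero_nat (𝕜 := ℝ))
    have hco : IsCoboundedUnder (· ≥ ·) atTop (fun t => x t 0) := by
      apply isCoboundedUnder_ge_of_eventually_le atTop (x := 3)
      filter_upwards [eventually_ge_atTop 1] with t ht
      exact (SPD_bounds (hmem t ht)).2.1
    calc (1:ℝ) = liminf (fun t : ℕ => (1:ℝ) - (t:ℝ)⁻¹) atTop := hlim.liminf_eq.symm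
      _ ≤ liminf (fun t => x t 0) atTop := liminf_le_liminf hub hlim.isBoundedUnder_ge hco
  · -- limsup part
    have hub : ∀ᶠ t : ℕ in atTop, x t 1 ≤ v 1 + 3 * (t:ℝ)⁻¹ := by
      filter_upwards [eventually_ge_atTop 1] with t ht
      have h := hB t ht
      have htpos : (0:ℝ) < (t:ℝ) := by exact_mod_cast ht
      have h3 : x t 1 - v 1 ≤ 3 / (t:ℝ) := (le_div_iff₀ htpos).mpr (by linarith)
      rw [div_eq_mul_inv] at h3
      linarith
    have hlim : Tendsto (fun t : ℕ => v 1 + 3 * (t:ℝ)⁻¹) atTop (nhds (v 1)) := by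
      have h3 : Tendsto (fun t : ℕ => (3:ℝ) * (t:ℝ)⁻¹) atTop (nhds 0) := by
        simpa using tendsto_const_nhds.mul (tendsto_inv_atTop_nhds_zero_nat (𝕜 := ℝ))
      simpa using (tendsto_const_nhds (x := v 1) (f := (atTop : Filter ℕ))).add h3
    have hco : IsCoboundedUnder (· ≤ ·) atTop (fun t => x t 1) := by
      apply isCoboundedUnder_le_of_eventually_le atTop (x := 0)
      filter_upwards [eventually_ge_atTop 1] with t ht
      exact (SPD_bounds (hmem t ht)).2.2.1
    calc limsup (fun t => x t 1) atTop
        ≤ limsup (fun t : ℕ => v 1 + 3 * (t:ℝ)⁻¹) atTop :=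
          limsup_le_limsup hub hco hlim.isBoundedUnder_le
      _ = v 1 := hlim.limsup_eq
end

section
/- Let a = (a₁,a₂), b = (b₁,b₂) ∈ B_PD \ {(1,2.5),(2.5,1)} and ε₁, ε₂ > 0. If a₁ ≤ 2 ≤ b₁, then every trajectory (x̄_t)_{t≥1} of the dynamical system induced by the profile (s₁^{a,ε₁}, s₂^{b,ε₂}), from any initial point in 𝔖, converges to (2,2) as t → ∞. -/
open Filter

namespace Aux13

lemma pt0 (u v : ℝ) : pt u v 0 = u := rfl
lemma pt1 (u v : ℝ) : pt u v 1 = v := rfl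

lemma mem22 : pt 2 2 ∈ SPD := subset_convexHull ℝ _ (by simp)
lemma mem03 : pt 0 3 ∈ SPD := subset_convexHull ℝ _ (by simp)
lemma mem30 : pt 3 0 ∈ SPD := subset_convexHull ℝ _ (by simp)
lemma mem11 : pt 1 1 ∈ SPD := subset_convexHull ℝ _ (by simp)

lemma payoff_mem (p q : Bool) : payoffPD p q ∈ SPD := by
  cases p <;> cases q <;> simp [payoffPD, mem22, mem03, mem30, mem11]

lemma convexSPD : Convex ℝ SPD := convex_convexHull ℝ _

lemma spd_ineq {x : E2} (hx : x ∈ SPD) :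
    3 ≤ 2 * x 0 + x 1 ∧ 2 * x 0 + x 1 ≤ 6 ∧ 3 ≤ x 0 + 2 * x 1 ∧ x 0 + 2 * x 1 ≤ 6 := by
  have hsub : SPD ⊆ {y : E2 | 3 ≤ 2 * y 0 + y 1 ∧ 2 * y 0 + y 1 ≤ 6 ∧
      3 ≤ y 0 + 2 * y 1 ∧ y 0 + 2 * y 1 ≤ 6} := by
    apply convexHull_min
    · intro p hp
      simp only [Set.mem_insert_iff, Set.mem_singleton_iff] at hp
      rcases hp with rfl | rfl | rfl | rfl <;> norm_num [pt0, pt1]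
    · intro p hp q hq s t hs ht hst
      simp only [Set.mem_setOf_eq] at *
      have h0 : (s • p + t • q) 0 = s * p 0 + t * q 0 := by
        simp [PiLp.add_apply, PiLp.smul_apply]
      have h1 : (s • p + t • q) 1 = s * p 1 + t * q 1 := by
        simp [PiLp.add_apply, PiLp.smul_apply]
      rw [h0, h1]
      refine ⟨by nlinarith, by nlinarith, by nlinarith, by nlinarith⟩
  exact hsub hx

lemma spd_x0 {x : E2} (hx : x ∈ SPD) : 0 ≤ x 0 ∧ x 0 ≤ 3 := by
  obtain ⟨h1, h2, h3, h4⟩ := spd_ineq hx; constructor <;> linarith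

lemma spd_x1 {x : E2} (hx : x ∈ SPD) : 0 ≤ x 1 ∧ x 1 ≤ 3 := by
  obtain ⟨h1, h2, h3, h4⟩ := spd_ineq hx; constructor <;> linarith

lemma spd_sum {x : E2} (hx : x ∈ SPD) : 2 ≤ x 0 + x 1 ∧ x 0 + x 1 ≤ 4 := by
  obtain ⟨h1, h2, h3, h4⟩ := spd_ineq hx; constructor <;> linarith

/-- membership of points on the segment from (0,3) to (3,0) -/
lemma seg_mem (p : ℝ) (h0 : 0 ≤ p) (h3 : p ≤ 3) :
    ∃ q : E2, q ∈ SPD ∧ q 0 = p ∧ q 1 = 3 - p := by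
  refine ⟨(1 - p / 3) • pt 0 3 + (p / 3) • pt 3 0, ?_, ?_, ?_⟩
  · exact convexSPD mem03 mem30 (by linarith) (by linarith) (by ring)
  · simp [PiLp.add_apply, PiLp.smul_apply, pt0] <;> ring
  · simp [PiLp.add_apply, PiLp.smul_apply, pt1] <;> ring



lemma extractA {a : E2} (ha : a ∈ BPD) (ha1 : a ≠ pt 1 (5 / 2)) (h2 : a 0 ≤ 2) :
    1 < a 0 ∧ a 0 ≤ 2 ∧ a 1 = 3 - a 0 / 2 := by
  rcases ha with ⟨s, hs1, hs2, rfl⟩ | ⟨s, hs1, hs2, rfl⟩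
  · rw [pt0, pt1]
    rcases eq_or_lt_of_le hs1 with h | h
    · exfalso; apply ha1; rw [← h]; norm_num
    · exact ⟨h, hs2, rfl⟩
  · rw [pt0] at h2 ⊢
    rw [pt1]
    have hs : s = 2 := by linarith
    subst hs
    norm_num

lemma extractB {b : E2} (hb : b ∈ BPD) (hb2 : b ≠ pt (5 / 2) 1) (h2 : 2 ≤ b 0) :
    1 < b 1 ∧ b 1 ≤ 2 ∧ b 0 = 3 - b 1 / 2 := by
  rcases hb with ⟨s, hs1, hs2, rfl⟩ | ⟨s, hs1, hs2, rfl⟩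
  · rw [pt0] at h2 ⊢
    rw [pt1]
    have hs : s = 2 := le_antisymm hs2 h2
    subst hs
    norm_num
  · rw [pt0, pt1]
    rcases eq_or_lt_of_le hs1 with h | h
    · exfalso; apply hb2; rw [← h]; norm_num
    · exact ⟨h, hs2, rfl⟩

section Regions

variable {a b : E2}

/-- structural hypotheses on a -/
def HA (a : E2) : Prop := 1 < a 0 ∧ a 0 ≤ 2 ∧ a 1 = 3 - a 0 / 2
def HB (b : E2) : Prop := 1 < b 1 ∧ b 1 ≤ 2 ∧ b 0 = 3 - b 1 / 2

noncomputable def k1 (a : E2) : ℝ := (a 1 - 1) / (a 0 - 1)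
noncomputable def k2 (b : E2) : ℝ := (b 1 - 1) / (b 0 - 1)

lemma hk1 (h : HA a) : 1 ≤ k1 a := by
  obtain ⟨h1, h2, h3⟩ := h
  rw [k1, le_div_iff₀ (by linarith)]
  linarith

lemma ha1_ge (h : HA a) : 2 ≤ a 1 := by obtain ⟨h1, h2, h3⟩ := h; linarith

lemma hb0_ge (h : HB b) : 2 ≤ b 0 := by obtain ⟨h1, h2, h3⟩ := h; linarith

lemma hk2_pos (h : HB b) : 0 < k2 b := by
  obtain ⟨h1, h2, h3⟩ := h
  exact div_pos (by linarith) (by linarith)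

lemma hk2_le (h : HB b) : k2 b ≤ 1 := by
  obtain ⟨h1, h2, h3⟩ := h
  rw [k2, div_le_one (by linarith)]
  linarith

lemma mem_T1_iff (h : HA a) {x : E2} :
    x ∈ T1 a ↔ x ∈ SPD ∧ x 1 - 1 ≤ k1 a * (x 0 - 1) := by
  have hd : a 0 - 1 ≠ 0 := by have := h.1; intro hc; linarith [h.1]
  have hc : (a 0 - a 1) / (a 0 - 1) = 1 - k1 a := by rw [k1]; field_simp; ring
  constructor
  · rintro ⟨h1, h2⟩
    rw [hc] at h2
    exact ⟨h1, by simp only [k1] at *; linarith⟩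
  · rintro ⟨h1, h2⟩
    refine ⟨h1, ?_⟩
    rw [hc]
    simp only [k1] at *
    linarith

lemma mem_T2_iff (h : HB b) {x : E2} :
    x ∈ T2 b ↔ x ∈ SPD ∧ k2 b * (x 0 - 1) ≤ x 1 - 1 := by
  have hd : b 0 - 1 ≠ 0 := by have := hb0_ge h; intro hc; linarith
  have hc : (b 0 - b 1) / (b 0 - 1) = 1 - k2 b := by rw [k2]; field_simp; ring
  constructor
  · rintro ⟨h1, h2⟩
    rw [hc] at h2
    exact ⟨h1, by simp only [k2] at *; linarith⟩
  · rintro ⟨h1, h2⟩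
    refine ⟨h1, ?_⟩
    rw [hc]
    simp only [k2] at *
    linarith

lemma mem_K1_iff {ε : ℝ} {x : E2} :
    x ∈ K1 a ε ↔ x ∈ Metric.cthickening ε (T1 a) ∧ x ∈ SPD ∧ 1 ≤ x 0 ∧ x 1 ≤ a 1 := by
  constructor
  · rintro ⟨hc, hs, h1, h2⟩; exact ⟨hc, hs, h1, h2⟩
  · rintro ⟨hc, hs, h1, h2⟩; exact ⟨hc, hs, h1, h2⟩

lemma mem_K2_iff {ε : ℝ} {x : E2} :
    x ∈ K2 b ε ↔ x ∈ Metric.cthickening ε (T2 b) ∧ x ∈ SPD ∧ x 0 ≤ b 0 ∧ 1 ≤ x 1 := by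
  constructor
  · rintro ⟨hc, hs, h1, h2⟩; exact ⟨hc, hs, h1, h2⟩
  · rintro ⟨hc, hs, h1, h2⟩; exact ⟨hc, hs, h1, h2⟩

lemma mem_K1_of (h : HA a) {ε : ℝ} {x : E2} (hx : x ∈ SPD)
    (hline : x 1 - 1 ≤ k1 a * (x 0 - 1)) (h1 : 1 ≤ x 0) (h2 : x 1 ≤ a 1) : x ∈ K1 a ε :=
  mem_K1_iff.2 ⟨Metric.self_subset_cthickening _ ((mem_T1_iff h).2 ⟨hx, hline⟩), hx, h1, h2⟩

lemma mem_K2_of (h : HB b) {ε : ℝ} {x : E2} (hx : x ∈ SPD)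
    (hline : k2 b * (x 0 - 1) ≤ x 1 - 1) (h1 : x 0 ≤ b 0) (h2 : 1 ≤ x 1) : x ∈ K2 b ε :=
  mem_K2_iff.2 ⟨Metric.self_subset_cthickening _ ((mem_T2_iff h).2 ⟨hx, hline⟩), hx, h1, h2⟩

end Regions

section Regions2
variable {a b : E2}

lemma comb_le {s t p q v : ℝ} (hs : 0 ≤ s) (ht : 0 ≤ t) (hst : s + t = 1)
    (hp : p ≤ v) (hq : q ≤ v) : s * p + t * q ≤ v := by
  have h := add_le_add (mul_le_mul_of_nonneg_left hp hs) (mul_le_mul_of_nonneg_left hq ht)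
  calc s * p + t * q ≤ s * v + t * v := h
    _ = (s + t) * v := by ring
    _ = v := by rw [hst, one_mul]

lemma mem_K2_low (h : HB b) {ε : ℝ} {x : E2} (hx : x ∈ SPD) (h0 : x 0 < 1) :
    x ∈ K2 b ε := by
  obtain ⟨hi1, hi2, hi3, hi4⟩ := spd_ineq hx
  have hx1 : 1 < x 1 := by linarith
  refine mem_K2_of h hx ?_ (by linarith [hb0_ge h]) hx1.le
  have := hk2_pos h
  nlinarith

lemma mem_K1_low (h : HA a) {ε : ℝ} {x : E2} (hx : x ∈ SPD) (h1 : x 1 < 1) :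
    x ∈ K1 a ε := by
  obtain ⟨hi1, hi2, hi3, hi4⟩ := spd_ineq hx
  have hx0 : 1 < x 0 := by linarith
  refine mem_K1_of h hx ?_ hx0.le (by linarith [ha1_ge h])
  have := hk1 h
  nlinarith

lemma cover (ha : HA a) (hb : HB b) {ε₁ ε₂ : ℝ} {x : E2} (hx : x ∈ SPD) :
    x ∈ K1 a ε₁ ∨ x ∈ K2 b ε₂ := by
  obtain ⟨hi1, hi2, hi3, hi4⟩ := spd_ineq hx
  rcases lt_or_ge (x 0) 1 with h0 | h0
  · exact Or.inr (mem_K2_low hb hx h0)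
  rcases lt_or_ge (x 1) 1 with h1 | h1
  · exact Or.inl (mem_K1_low ha hx h1)
  have hk1' := hk1 ha
  have hk2p := hk2_pos hb
  have hk2l := hk2_le hb
  rcases le_or_gt (x 1 - 1) (k1 a * (x 0 - 1)) with hbl | hbl
  · rcases le_or_gt (x 1) (a 1) with hup | hup
    · exact Or.inl (mem_K1_of ha hx hbl h0 hup)
    · have h2 : 2 < x 1 := lt_of_le_of_lt (ha1_ge ha) hup
      have h02 : x 0 < 2 := by linarith
      refine Or.inr (mem_K2_of hb hx ?_ (by linarith [hb0_ge hb]) h1)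
      nlinarith
  · rcases le_or_gt (x 0) (b 0) with hr | hr
    · refine Or.inr (mem_K2_of hb hx ?_ hr h1)
      nlinarith
    · exfalso
      have hb0 := hb0_ge hb
      nlinarith

lemma pt22_mem_K1 (ha : HA a) {ε : ℝ} : pt 2 2 ∈ K1 a ε := by
  refine mem_K1_of ha mem22 ?_ ?_ ?_ <;> simp only [pt0, pt1]
  · linarith [hk1 ha]
  · norm_num
  · exact ha1_ge ha

lemma pt22_mem_K2 (hb : HB b) {ε : ℝ} : pt 2 2 ∈ K2 b ε := by
  refine mem_K2_of hb mem22 ?_ ?_ ?_ <;> simp only [pt0, pt1]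
  · linarith [hk2_le hb]
  · exact hb0_ge hb
  · norm_num

lemma convex_T1 (v : E2) : Convex ℝ (T1 v) := by
  intro p hp q hq s t hs ht hst
  obtain ⟨hp1, hp2⟩ := hp
  obtain ⟨hq1, hq2⟩ := hq
  refine ⟨convexSPD hp1 hq1 hs ht hst, ?_⟩
  have h0 : (s • p + t • q) 0 = s * p 0 + t * q 0 := by
    simp [PiLp.add_apply, PiLp.smul_apply]
  have h1 : (s • p + t • q) 1 = s * p 1 + t * q 1 := by
    simp [PiLp.add_apply, PiLp.smul_apply]
  rw [h0, h1]
  set d := (v 1 - 1) / (v 0 - 1) with hd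
  set e := (v 0 - v 1) / (v 0 - 1) with he
  have key := comb_le hs ht hst (show p 1 - d * p 0 ≤ e by linarith)
    (show q 1 - d * q 0 ≤ e by linarith)
  nlinarith [key]

lemma convex_T2 (v : E2) : Convex ℝ (T2 v) := by
  intro p hp q hq s t hs ht hst
  obtain ⟨hp1, hp2⟩ := hp
  obtain ⟨hq1, hq2⟩ := hq
  refine ⟨convexSPD hp1 hq1 hs ht hst, ?_⟩
  have h0 : (s • p + t • q) 0 = s * p 0 + t * q 0 := by
    simp [PiLp.add_apply, PiLp.smul_apply]
  have h1 : (s • p + t • q) 1 = s * p 1 + t * q 1 := by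
    simp [PiLp.add_apply, PiLp.smul_apply]
  rw [h0, h1]
  set d := (v 1 - 1) / (v 0 - 1) with hd
  set e := (v 0 - v 1) / (v 0 - 1) with he
  have key := comb_le hs ht hst (show d * p 0 - p 1 ≤ -e by linarith)
    (show d * q 0 - q 1 ≤ -e by linarith)
  nlinarith [key]

lemma convex_box1 (v : E2) : Convex ℝ {x : E2 | x ∈ SPD ∧ 1 ≤ x 0 ∧ x 1 ≤ v 1} := by
  intro p hp q hq s t hs ht hst
  obtain ⟨hp1, hp2, hp3⟩ := hp
  obtain ⟨hq1, hq2, hq3⟩ := hq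
  have h0 : (s • p + t • q) 0 = s * p 0 + t * q 0 := by
    simp [PiLp.add_apply, PiLp.smul_apply]
  have h1 : (s • p + t • q) 1 = s * p 1 + t * q 1 := by
    simp [PiLp.add_apply, PiLp.smul_apply]
  refine ⟨convexSPD hp1 hq1 hs ht hst, ?_, ?_⟩
  · rw [h0]
    have key := comb_le hs ht hst (show -p 0 ≤ -1 by linarith) (show -q 0 ≤ -1 by linarith)
    nlinarith [key]
  · rw [h1]
    exact comb_le hs ht hst hp3 hq3

lemma convex_box2 (v : E2) : Convex ℝ {x : E2 | x ∈ SPD ∧ x 0 ≤ v 0 ∧ 1 ≤ x 1} := by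
  intro p hp q hq s t hs ht hst
  obtain ⟨hp1, hp2, hp3⟩ := hp
  obtain ⟨hq1, hq2, hq3⟩ := hq
  have h0 : (s • p + t • q) 0 = s * p 0 + t * q 0 := by
    simp [PiLp.add_apply, PiLp.smul_apply]
  have h1 : (s • p + t • q) 1 = s * p 1 + t * q 1 := by
    simp [PiLp.add_apply, PiLp.smul_apply]
  refine ⟨convexSPD hp1 hq1 hs ht hst, ?_, ?_⟩
  · rw [h0]
    exact comb_le hs ht hst hp2 hq2
  · rw [h1]
    have key := comb_le hs ht hst (show -p 1 ≤ -1 by linarith) (show -q 1 ≤ -1 by linarith)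
    nlinarith [key]

lemma convex_K1 (v : E2) (ε : ℝ) : Convex ℝ (K1 v ε) :=
  ((convex_T1 v).cthickening ε).inter (convex_box1 v)

lemma convex_K2 (v : E2) (ε : ℝ) : Convex ℝ (K2 v ε) :=
  ((convex_T2 v).cthickening ε).inter (convex_box2 v)

end Regions2

end Aux13

namespace Aux13
section Sep
variable {a b : E2}

lemma sep_quad {ε δ e u : ℝ} (hε : 0 < ε) (hδ0 : 0 ≤ δ) (hδ : δ ≤ ε / 4) (he : |e| ≤ δ)
    (hu : -δ ≤ u) (h : ε ^ 2 < u ^ 2 + (e - u) ^ 2) : ε / 2 - δ ≤ u := by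
  by_contra hc
  push_neg at hc
  obtain ⟨he1, he2⟩ := abs_le.1 he
  nlinarith [sq_nonneg (e - u), sq_nonneg u, sq_nonneg (u + δ), sq_nonneg (e + δ), sq_nonneg (e - δ)]

/-- points on line-of-slope through (1,1): p = 1 + 1/(1+k) -/
noncomputable def pp (k : ℝ) : ℝ := 1 + 1 / (1 + k)

lemma pp_eq {k : ℝ} (hk : 0 < 1 + k) : (1 + k) * pp k = 2 + k := by
  rw [pp]; field_simp; ring

/-- the point (p, 3-p) for the relevant range is in SPD -/
lemma q_mem {p : ℝ} (h0 : 0 ≤ p) (h3 : p ≤ 3) :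
    ∃ q : E2, q ∈ SPD ∧ q 0 = p ∧ q 1 = 3 - p :=
  seg_mem p h0 h3

lemma dist_sq_lt {x q : E2} {ε : ℝ} (hε : 0 ≤ ε) (h : ε < dist x q) :
    ε ^ 2 < (x 0 - q 0) ^ 2 + (x 1 - q 1) ^ 2 := by
  have hd : dist x q = Real.sqrt ((x 0 - q 0) ^ 2 + (x 1 - q 1) ^ 2) := by
    rw [EuclideanSpace.dist_eq]
    simp [Fin.sum_univ_two, Real.dist_eq, sq_abs]
  rw [hd] at h
  exact (Real.lt_sqrt hε).1 h

/-- Separation, CD side: if x ∈ SPD is not in K2 and its coordinate sum is close to 3,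
then x 0 is large. -/
lemma sep_CD (hb : HB b) {ε₂ : ℝ} (hε₂ : 0 < ε₂) {x : E2} (hx : x ∈ SPD)
    (hnk : x ∉ K2 b ε₂) {δ : ℝ} (hδ0 : 0 ≤ δ) (hδ : δ ≤ ε₂ / 4)
    (hl : |x 0 + x 1 - 3| ≤ δ) :
    min 2 (pp (k2 b) + min (ε₂ / 2) (1 / 4)) - δ ≤ x 0 := by
  have hk2p := hk2_pos hb
  have hk2l := hk2_le hb
  have hkd : (0:ℝ) < 1 + k2 b := by linarith
  obtain ⟨hl1, hl2⟩ := abs_le.1 hl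
  have hmin2 : min 2 (pp (k2 b) + min (ε₂ / 2) (1 / 4)) ≤ 2 := min_le_left _ _
  rcases lt_or_ge (x 1) 1 with h1 | h1
  · linarith
  rcases lt_or_ge (b 0) (x 0) with h0 | h0
  · have := hb0_ge hb; linarith
  -- so the cthickening condition must fail
  have hcth : x ∉ Metric.cthickening ε₂ (T2 b) := by
    intro hc
    exact hnk (mem_K2_iff.2 ⟨hc, hx, h0, h1⟩)
  -- x is strictly below the line L2
  have hbl : x 1 - 1 < k2 b * (x 0 - 1) := by
    by_contra hcc
    push_neg at hcc
    exact hcth (Metric.self_subset_cthickening _ ((mem_T2_iff hb).2 ⟨hx, hcc⟩))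
  -- the reference point q2 on L2 ∩ {sum = 3}
  have hpp1 : (3:ℝ)/2 ≤ pp (k2 b) := by
    rw [pp]
    have h2 : 1 / (1 + k2 b) ≥ 1 / 2 := by
      apply one_div_le_one_div_of_le <;> linarith
    linarith
  have hpp2 : pp (k2 b) < 2 := by
    rw [pp]
    have h2 : 1 / (1 + k2 b) < 1 := by
      rw [div_lt_one hkd]; linarith
    linarith
  obtain ⟨q, hqS, hq0, hq1⟩ := q_mem (p := pp (k2 b)) (by linarith) (by linarith)
  have hqT2 : q ∈ T2 b := by
    refine (mem_T2_iff hb).2 ⟨hqS, ?_⟩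
    rw [hq0, hq1]
    have := pp_eq hkd
    have h' : k2 b * (pp (k2 b) - 1) = k2 b / (1 + k2 b) := by
      rw [pp]; field_simp; ring
    rw [h']
    rw [div_le_iff₀ hkd]  -- k2/(1+k2) ≤ (2 - pp) * (1+k2)?
    nlinarith [pp_eq hkd]
  have hdist : ε₂ < dist x q := by
    by_contra hdd
    push_neg at hdd
    exact hcth (Metric.mem_cthickening_of_dist_le x q _ _ hqT2 hdd)
  have hsq := dist_sq_lt hε₂.le hdist
  rw [hq0, hq1] at hsq
  -- apply the quadratic lemma with u = x0 - p, e = x0 + x1 - 3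
  set u := x 0 - pp (k2 b) with hu
  set e := x 0 + x 1 - 3 with he
  have hx1e : x 1 - (3 - pp (k2 b)) = e - u := by rw [he, hu]; ring
  rw [hx1e] at hsq
  have hul : -δ ≤ u := by
    -- from strictly below line: (1+k) x0 > 2 + k + e
    have h2 : (1 + k2 b) * x 0 > 2 + k2 b + e := by
      have hx1 : x 1 = 3 + e - x 0 := by rw [he]; ring
      nlinarith
    have h3 : (1 + k2 b) * u > e := by
      have := pp_eq hkd
      nlinarith
    nlinarith
  have := sep_quad hε₂ hδ0 hδ (abs_le.2 ⟨hl1, hl2⟩) hul hsq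
  have hm : min (ε₂ / 2) (1/4) ≤ ε₂ / 2 := min_le_left _ _
  have : min 2 (pp (k2 b) + min (ε₂ / 2) (1 / 4)) ≤ pp (k2 b) + min (ε₂ / 2) (1/4) :=
    min_le_right _ _
  linarith

/-- Separation, DC side: if x ∈ SPD is not in K1 and its coordinate sum is close to 3,
then x 0 is small. -/
lemma sep_DC (ha : HA a) {ε₁ : ℝ} (hε₁ : 0 < ε₁) {x : E2} (hx : x ∈ SPD)
    (hnk : x ∉ K1 a ε₁) {δ : ℝ} (hδ0 : 0 ≤ δ) (hδ : δ ≤ ε₁ / 4)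
    (hl : |x 0 + x 1 - 3| ≤ δ) :
    x 0 ≤ max 1 (pp (k1 a) - min (ε₁ / 2) (1 / 4)) + δ := by
  have hk1' := hk1 ha
  have hkd : (0:ℝ) < 1 + k1 a := by linarith
  obtain ⟨hl1, hl2⟩ := abs_le.1 hl
  have hmax1 : (1:ℝ) ≤ max 1 (pp (k1 a) - min (ε₁ / 2) (1 / 4)) := le_max_left _ _
  rcases lt_or_ge (x 0) 1 with h0 | h0
  · linarith
  rcases lt_or_ge (a 1) (x 1) with h1 | h1
  · have := ha1_ge ha; linarith
  have hcth : x ∉ Metric.cthickening ε₁ (T1 a) := by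
    intro hc
    exact hnk (mem_K1_iff.2 ⟨hc, hx, h0, h1⟩)
  have hbl : k1 a * (x 0 - 1) < x 1 - 1 := by
    by_contra hcc
    push_neg at hcc
    exact hcth (Metric.self_subset_cthickening _ ((mem_T1_iff ha).2 ⟨hx, hcc⟩))
  have hpp1 : 1 < pp (k1 a) := by
    rw [pp]
    have h2 : 0 < 1 / (1 + k1 a) := by positivity
    linarith
  have hpp2 : pp (k1 a) ≤ 3 / 2 := by
    rw [pp]
    have h2 : 1 / (1 + k1 a) ≤ 1 / 2 := by
      apply one_div_le_one_div_of_le <;> linarith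
    linarith
  obtain ⟨q, hqS, hq0, hq1⟩ := q_mem (p := pp (k1 a)) (by linarith) (by linarith)
  have hqT1 : q ∈ T1 a := by
    refine (mem_T1_iff ha).2 ⟨hqS, ?_⟩
    rw [hq0, hq1]
    have h' : k1 a * (pp (k1 a) - 1) = k1 a / (1 + k1 a) := by
      rw [pp]; field_simp; ring
    rw [h']
    rw [le_div_iff₀ hkd]
    nlinarith [pp_eq hkd]
  have hdist : ε₁ < dist x q := by
    by_contra hdd
    push_neg at hdd
    exact hcth (Metric.mem_cthickening_of_dist_le x q _ _ hqT1 hdd)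
  have hsq := dist_sq_lt hε₁.le hdist
  rw [hq0, hq1] at hsq
  have h1r : (x 0 - pp (k1 a)) ^ 2 = (pp (k1 a) - x 0) ^ 2 := by ring
  have h2r : (x 1 - (3 - pp (k1 a))) ^ 2 =
      ((-(x 0 + x 1 - 3)) - (pp (k1 a) - x 0)) ^ 2 := by ring
  rw [h1r, h2r] at hsq
  have hul : -δ ≤ pp (k1 a) - x 0 := by
    have h2 : (1 + k1 a) * x 0 < 2 + k1 a + (x 0 + x 1 - 3) := by nlinarith
    have h3 : (1 + k1 a) * (pp (k1 a) - x 0) > -(x 0 + x 1 - 3) := by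
      nlinarith [pp_eq hkd]
    nlinarith
  have hne : |-(x 0 + x 1 - 3)| ≤ δ := by
    rw [abs_neg]
    exact abs_le.2 ⟨hl1, hl2⟩
  have := sep_quad hε₁ hδ0 hδ hne hul hsq
  have hm : min (ε₁ / 2) (1/4) ≤ ε₁ / 2 := min_le_left _ _
  have hmx : pp (k1 a) - min (ε₁ / 2) (1/4) ≤ max 1 (pp (k1 a) - min (ε₁ / 2) (1 / 4)) :=
    le_max_right _ _
  linarith

end Sep
end Aux13

namespace Aux13
section Traj

variable {a b : E2} {ε₁ ε₂ : ℝ} {f : E2 → E2} {x : ℕ → E2}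

lemma pp_le_32 {k : ℝ} (hk : 1 ≤ k) : pp k ≤ 3 / 2 := by
  rw [pp]
  have h2 : 1 / (1 + k) ≤ 1 / 2 := by
    apply one_div_le_one_div_of_le <;> linarith
  linarith

lemma pp_ge_32 {k : ℝ} (hk0 : 0 < k) (hk : k ≤ 1) : 3 / 2 ≤ pp k := by
  rw [pp]
  have h2 : 1 / (1 + k) ≥ 1 / 2 := by
    apply one_div_le_one_div_of_le <;> linarith
  linarith

lemma traj_coord (hx : IsTrajPD f x) (t : ℕ) (ht : 1 ≤ t) (i : Fin 2) :
    x (t + 1) i = ((t : ℝ) + 1)⁻¹ * ((t : ℝ) * x t i + f (x t) i) := by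
  rw [hx.2 t ht]
  simp [PiLp.add_apply, PiLp.smul_apply]
  ring

lemma traj_comb (hx : IsTrajPD f x) (t : ℕ) (ht : 1 ≤ t) :
    x (t + 1) = ((t : ℝ) / ((t : ℝ) + 1)) • x t + (((t : ℝ) + 1)⁻¹) • f (x t) := by
  rw [hx.2 t ht, smul_add, smul_smul, div_eq_inv_mul]

lemma coeff_facts (t : ℕ) : 0 ≤ (t : ℝ) / ((t : ℝ) + 1) ∧ 0 ≤ ((t : ℝ) + 1)⁻¹ ∧
    (t : ℝ) / ((t : ℝ) + 1) + ((t : ℝ) + 1)⁻¹ = 1 := by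
  have h0 : (0:ℝ) ≤ (t : ℝ) := Nat.cast_nonneg t
  have h1 : (0:ℝ) < (t : ℝ) + 1 := by linarith
  refine ⟨by positivity, by positivity, ?_⟩
  field_simp

lemma traj_mem (hx : IsTrajPD f x) (hfS : ∀ y, f y ∈ SPD) (t : ℕ) (ht : 1 ≤ t) :
    x t ∈ SPD := by
  induction t, ht using Nat.le_induction with
  | base => exact hx.1
  | succ n hn ih =>
    rw [traj_comb hx n hn]
    obtain ⟨hc1, hc2, hc3⟩ := coeff_facts n
    exact convexSPD ih (hfS (x n)) hc1 hc2 hc3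

/-- Part A: once in K = K1 ∩ K2, the trajectory converges to (2,2). -/
lemma absorb (ha : HA a) (hb : HB b) (hx : IsTrajPD f x)
    (hf22 : ∀ y, y ∈ K1 a ε₁ → y ∈ K2 b ε₂ → f y = pt 2 2)
    (T : ℕ) (hT : 1 ≤ T) (hmem : x T ∈ K1 a ε₁ ∩ K2 b ε₂) :
    Filter.Tendsto x Filter.atTop (nhds (pt 2 2)) := by
  have hTR : (0:ℝ) < (T : ℝ) := by exact_mod_cast hT
  have key : ∀ n, T ≤ n → x n ∈ K1 a ε₁ ∩ K2 b ε₂ ∧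
      x n 0 - 2 = ((T : ℝ) / n) * (x T 0 - 2) ∧
      x n 1 - 2 = ((T : ℝ) / n) * (x T 1 - 2) := by
    intro n hn
    induction n, hn using Nat.le_induction with
    | base =>
      refine ⟨hmem, ?_, ?_⟩ <;> rw [div_self (ne_of_gt hTR), one_mul]
    | succ n hn ih =>
      obtain ⟨ihK, ih0, ih1⟩ := ih
      have hn1 : 1 ≤ n := le_trans hT hn
      have hnR : (0:ℝ) < (n : ℝ) := by exact_mod_cast hn1
      have hn1R : (0:ℝ) < (n : ℝ) + 1 := by linarith
      have hfeq : f (x n) = pt 2 2 := hf22 (x n) ihK.1 ihK.2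
      have hKmem : x (n + 1) ∈ K1 a ε₁ ∩ K2 b ε₂ := by
        rw [traj_comb hx n hn1, hfeq]
        obtain ⟨hc1, hc2, hc3⟩ := coeff_facts n
        exact ((convex_K1 a ε₁).inter (convex_K2 b ε₂)) ihK
          ⟨pt22_mem_K1 ha, pt22_mem_K2 hb⟩ hc1 hc2 hc3
      refine ⟨hKmem, ?_, ?_⟩
      · have h0 := traj_coord hx n hn1 0
        rw [hfeq, pt0] at h0
        have hxn : x n 0 = 2 + (T : ℝ) / n * (x T 0 - 2) := by linarith
        have hne : (n : ℝ) ≠ 0 := ne_of_gt hnR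
        have hne1 : (n : ℝ) + 1 ≠ 0 := ne_of_gt hn1R
        rw [h0, hxn]
        push_cast
        first
        | (field_simp; ring)
        | field_simp
      · have h1 := traj_coord hx n hn1 1
        rw [hfeq, pt1] at h1
        have hxn : x n 1 = 2 + (T : ℝ) / n * (x T 1 - 2) := by linarith
        have hne : (n : ℝ) ≠ 0 := ne_of_gt hnR
        have hne1 : (n : ℝ) + 1 ≠ 0 := ne_of_gt hn1R
        rw [h1, hxn]
        push_cast
        first
        | (field_simp; ring)
        | field_simp
  rw [Metric.tendsto_atTop]
  intro ε hε
  set C : ℝ := (T : ℝ) * (|x T 0 - 2| + |x T 1 - 2|) + 1 with hC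
  have hCpos : 0 < C := by positivity
  obtain ⟨N0, hN0⟩ := exists_nat_gt (C / ε)
  refine ⟨max N0 T, fun n hn => ?_⟩
  have hnT : T ≤ n := le_trans (le_max_right _ _) hn
  have hnN0 : (N0 : ℝ) ≤ (n : ℝ) := by exact_mod_cast le_trans (le_max_left _ _) hn
  have hnR : (0:ℝ) < (n : ℝ) := lt_of_lt_of_le hTR (by exact_mod_cast hnT)
  obtain ⟨hK, h0, h1⟩ := key n hnT
  have hd : dist (x n) (pt 2 2) = Real.sqrt ((x n 0 - 2) ^ 2 + (x n 1 - 2) ^ 2) := by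
    rw [EuclideanSpace.dist_eq]
    simp [Fin.sum_univ_two, Real.dist_eq, sq_abs, pt0, pt1]
  have hsqrt : dist (x n) (pt 2 2) ≤ |x n 0 - 2| + |x n 1 - 2| := by
    rw [hd]
    have h2 : (x n 0 - 2) ^ 2 + (x n 1 - 2) ^ 2 ≤ (|x n 0 - 2| + |x n 1 - 2|) ^ 2 := by
      have e1 : |x n 0 - 2| ^ 2 = (x n 0 - 2) ^ 2 := sq_abs _
      have e2 : |x n 1 - 2| ^ 2 = (x n 1 - 2) ^ 2 := sq_abs _
      nlinarith [abs_nonneg (x n 0 - 2), abs_nonneg (x n 1 - 2)]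
    calc Real.sqrt ((x n 0 - 2) ^ 2 + (x n 1 - 2) ^ 2)
        ≤ Real.sqrt ((|x n 0 - 2| + |x n 1 - 2|) ^ 2) := Real.sqrt_le_sqrt h2
      _ = |x n 0 - 2| + |x n 1 - 2| := Real.sqrt_sq (by positivity)
  have habs : |x n 0 - 2| + |x n 1 - 2| = ((T : ℝ) / n) * (|x T 0 - 2| + |x T 1 - 2|) := by
    have d0 : |x n 0 - 2| = ((T : ℝ) / n) * |x T 0 - 2| := by
      rw [h0, abs_mul, abs_of_nonneg (by positivity : (0:ℝ) ≤ (T : ℝ) / n)]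
    have d1 : |x n 1 - 2| = ((T : ℝ) / n) * |x T 1 - 2| := by
      rw [h1, abs_mul, abs_of_nonneg (by positivity : (0:ℝ) ≤ (T : ℝ) / n)]
    rw [d0, d1]; ring
  have hfin : ((T : ℝ) / n) * (|x T 0 - 2| + |x T 1 - 2|) < ε := by
    rw [div_mul_eq_mul_div, div_lt_iff₀ hnR]
    have hCn : C < ε * n := by
      rw [div_lt_iff₀ hε] at hN0
      nlinarith [hN0, hnN0, hε.le]
    calc (T : ℝ) * (|x T 0 - 2| + |x T 1 - 2|) = C - 1 := by rw [hC]; ring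
      _ < ε * n := by linarith
  calc dist (x n) (pt 2 2) ≤ |x n 0 - 2| + |x n 1 - 2| := hsqrt
    _ = ((T : ℝ) / n) * (|x T 0 - 2| + |x T 1 - 2|) := habs
    _ < ε := hfin

end Traj
end Aux13

namespace Aux13
section PartB

variable {a b : E2} {ε₁ ε₂ : ℝ} {f : E2 → E2} {x : ℕ → E2}

/-- Region dichotomy under the assumption that the trajectory never reaches K1 ∩ K2. -/
lemma hreg (ha : HA a) (hb : HB b) (hx : IsTrajPD f x) (hfS : ∀ y, f y ∈ SPD)
    (hf03 : ∀ y, y ∈ K1 a ε₁ → y ∉ K2 b ε₂ → f y = pt 0 3)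
    (hf30 : ∀ y, y ∉ K1 a ε₁ → y ∈ K2 b ε₂ → f y = pt 3 0)
    (hnot : ∀ t, 1 ≤ t → x t ∉ K1 a ε₁ ∩ K2 b ε₂) (t : ℕ) (ht : 1 ≤ t) :
    (x t ∈ K1 a ε₁ ∧ x t ∉ K2 b ε₂ ∧ f (x t) = pt 0 3) ∨
    (x t ∉ K1 a ε₁ ∧ x t ∈ K2 b ε₂ ∧ f (x t) = pt 3 0) := by
  have hS := traj_mem hx hfS t ht
  by_cases h1 : x t ∈ K1 a ε₁
  · have h2 : x t ∉ K2 b ε₂ := fun h2 => hnot t ht ⟨h1, h2⟩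
    exact Or.inl ⟨h1, h2, hf03 _ h1 h2⟩
  · have h2 : x t ∈ K2 b ε₂ := by
      rcases cover ha hb hS (ε₁ := ε₁) (ε₂ := ε₂) with h | h
      · exact absurd h h1
      · exact h
    exact Or.inr ⟨h1, h2, hf30 _ h1 h2⟩

/-- The coordinate sum recursion: (t)(ℓ_t - 3) is constant when f always has sum 3. -/
lemma sum_rec (hx : IsTrajPD f x)
    (hf3 : ∀ t, 1 ≤ t → f (x t) 0 + f (x t) 1 = 3) (t : ℕ) (ht : 1 ≤ t) :
    (t : ℝ) * (x t 0 + x t 1 - 3) = x 1 0 + x 1 1 - 3 := by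
  induction t, ht using Nat.le_induction with
  | base => norm_num
  | succ n hn ih =>
    have hnR : (0:ℝ) < (n : ℝ) := by exact_mod_cast hn
    have hn1R : (0:ℝ) < (n : ℝ) + 1 := by linarith
    have h0 := traj_coord hx n hn 0
    have h1 := traj_coord hx n hn 1
    have h3 := hf3 n hn
    rw [← ih]
    push_cast
    rw [h0, h1]
    field_simp
    linarith [h3]

lemma sum_close (hx : IsTrajPD f x) (hfS : ∀ y, f y ∈ SPD)
    (hf3 : ∀ t, 1 ≤ t → f (x t) 0 + f (x t) 1 = 3) (t : ℕ) (ht : 1 ≤ t) :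
    |x t 0 + x t 1 - 3| ≤ 1 / (t : ℝ) := by
  have hS1 := traj_mem hx hfS 1 le_rfl
  obtain ⟨hs1, hs2⟩ := spd_sum hS1
  have h := sum_rec hx hf3 t ht
  have htR : (0:ℝ) < (t : ℝ) := by exact_mod_cast ht
  have habs : |(t : ℝ) * (x t 0 + x t 1 - 3)| ≤ 1 := by
    rw [h, abs_le]; constructor <;> linarith
  rw [abs_mul, abs_of_pos htR] at habs
  rw [le_div_iff₀ htR]
  linarith [abs_nonneg (x t 0 + x t 1 - 3), habs]

/-- There is a region switch after any time, otherwise the trajectory runs into K1 ∩ K2. -/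
lemma switch_exists (ha : HA a) (hb : HB b) (hx : IsTrajPD f x) (hfS : ∀ y, f y ∈ SPD)
    (hf03 : ∀ y, y ∈ K1 a ε₁ → y ∉ K2 b ε₂ → f y = pt 0 3)
    (hf30 : ∀ y, y ∉ K1 a ε₁ → y ∈ K2 b ε₂ → f y = pt 3 0)
    (hnot : ∀ t, 1 ≤ t → x t ∉ K1 a ε₁ ∩ K2 b ε₂) (N : ℕ) (hN : 1 ≤ N) :
    ∃ t, N ≤ t ∧ ((x t ∈ K1 a ε₁ ∧ x (t + 1) ∉ K1 a ε₁) ∨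
      (x t ∉ K1 a ε₁ ∧ x (t + 1) ∈ K1 a ε₁)) := by
  by_contra hcon
  push_neg at hcon
  -- then membership in K1 is constant from N on
  have hconst : ∀ t, N ≤ t → (x t ∈ K1 a ε₁ ↔ x N ∈ K1 a ε₁) := by
    intro t htN
    induction t, htN using Nat.le_induction with
    | base => rfl
    | succ n hn ih =>
      obtain ⟨hc1, hc2⟩ := hcon n hn
      constructor
      · intro h
        by_cases hxn : x n ∈ K1 a ε₁
        · exact ih.1 hxn
        · exact absurd h (hc2 hxn)
      · intro h
        exact hc1 (ih.2 h)
  by_cases hcase : x N ∈ K1 a ε₁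
  · -- always in K1, f = (0,3), first coordinate decays to 0 < 1, so eventually in K2 too
    have hall : ∀ t, N ≤ t → x t ∈ K1 a ε₁ ∧ x t ∉ K2 b ε₂ ∧ f (x t) = pt 0 3 := by
      intro t htN
      have h1 := (hconst t htN).2 hcase
      rcases hreg ha hb hx hfS hf03 hf30 hnot t (le_trans hN htN) with h | h
      · exact h
      · exact absurd h1 h.1
    have hdecay : ∀ t, N ≤ t → (t : ℝ) * x t 0 = (N : ℝ) * x N 0 := by
      intro t htN
      induction t, htN using Nat.le_induction with
      | base => rfl
      | succ n hn ih =>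
        have hn1 : 1 ≤ n := le_trans hN hn
        have h0 := traj_coord hx n hn1 0
        rw [(hall n hn).2.2, pt0] at h0
        have hn1R : (0:ℝ) < (n : ℝ) + 1 := by positivity
        push_cast
        rw [h0, ← ih]
        field_simp
        ring
    -- pick t = 3N + 1
    set t := 3 * N + 1 with htdef
    have htN : N ≤ t := by omega
    have ht1 : 1 ≤ t := by omega
    have hS := traj_mem hx hfS t ht1
    have hx0 : x t 0 < 1 := by
      have hd := hdecay t htN
      have hub : x N 0 ≤ 3 := (spd_x0 (traj_mem hx hfS N hN)).2
      have hlb : 0 ≤ x N 0 := (spd_x0 (traj_mem hx hfS N hN)).1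
      have htR : ((t : ℕ) : ℝ) = 3 * (N : ℝ) + 1 := by rw [htdef]; push_cast; ring
      have hNR : (0:ℝ) < (N : ℝ) := by exact_mod_cast hN
      nlinarith [hd, htR]
    have hK2 : x t ∈ K2 b ε₂ := mem_K2_low hb hS hx0
    exact hnot t ht1 ⟨(hall t htN).1, hK2⟩
  · -- never in K1, always in K2, f = (3,0), second coordinate decays
    have hall : ∀ t, N ≤ t → x t ∉ K1 a ε₁ ∧ x t ∈ K2 b ε₂ ∧ f (x t) = pt 3 0 := by
      intro t htN
      have h1 : x t ∉ K1 a ε₁ := fun h => hcase ((hconst t htN).1 h)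
      rcases hreg ha hb hx hfS hf03 hf30 hnot t (le_trans hN htN) with h | h
      · exact absurd h.1 h1
      · exact h
    have hdecay : ∀ t, N ≤ t → (t : ℝ) * x t 1 = (N : ℝ) * x N 1 := by
      intro t htN
      induction t, htN using Nat.le_induction with
      | base => rfl
      | succ n hn ih =>
        have hn1 : 1 ≤ n := le_trans hN hn
        have h1 := traj_coord hx n hn1 1
        rw [(hall n hn).2.2, pt1] at h1
        have hn1R : (0:ℝ) < (n : ℝ) + 1 := by positivity
        push_cast
        rw [h1, ← ih]
        field_simp
        ring
    set t := 3 * N + 1 with htdef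
    have htN : N ≤ t := by omega
    have ht1 : 1 ≤ t := by omega
    have hS := traj_mem hx hfS t ht1
    have hx1 : x t 1 < 1 := by
      have hd := hdecay t htN
      have hub : x N 1 ≤ 3 := (spd_x1 (traj_mem hx hfS N hN)).2
      have hlb : 0 ≤ x N 1 := (spd_x1 (traj_mem hx hfS N hN)).1
      have htR : ((t : ℕ) : ℝ) = 3 * (N : ℝ) + 1 := by rw [htdef]; push_cast; ring
      have hNR : (0:ℝ) < (N : ℝ) := by exact_mod_cast hN
      nlinarith [hd, htR]
    have hK1 : x t ∈ K1 a ε₁ := mem_K1_low ha hS hx1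
    exact hnot t ht1 ⟨hK1, (hall t htN).2.1⟩

end PartB
end Aux13


open Aux13

/-- Theorem 4.2, case a₁ ≤ 2 ≤ b₁: if player 1 plays the semi-cooperative strategy
determined by a and player 2 the one determined by b, with a₁ ≤ 2 ≤ b₁, then every
trajectory of average payoffs, from any initial point in 𝔖, converges to (2,2). -/
theorem stmt13 (a b : E2) (ha : a ∈ BPD) (ha1 : a ≠ pt 1 (5 / 2)) (ha2 : a ≠ pt (5 / 2) 1)
    (hb : b ∈ BPD) (hb1 : b ≠ pt 1 (5 / 2)) (hb2 : b ≠ pt (5 / 2) 1)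
    (ε₁ ε₂ : ℝ) (hε₁ : 0 < ε₁) (hε₂ : 0 < ε₂)
    (hab : a 0 ≤ 2 ∧ 2 ≤ b 0) (x : ℕ → E2)
    (hx : IsTrajPD (fun p => payoffPD (semi1 a ε₁ p) (semi2 b ε₂ p)) x) :
    Tendsto x atTop (nhds (pt 2 2)) := by
  have hA : HA a := extractA ha ha1 hab.1
  have hB : HB b := extractB hb hb2 hab.2
  set f : E2 → E2 := fun p => payoffPD (semi1 a ε₁ p) (semi2 b ε₂ p) with hf
  have hfS : ∀ y, f y ∈ SPD := fun y => payoff_mem _ _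
  have hf22 : ∀ y, y ∈ K1 a ε₁ → y ∈ K2 b ε₂ → f y = pt 2 2 := by
    intro y h1 h2
    simp only [hf, semi1, semi2, if_pos h1, if_pos h2]
    rfl
  have hf03 : ∀ y, y ∈ K1 a ε₁ → y ∉ K2 b ε₂ → f y = pt 0 3 := by
    intro y h1 h2
    simp only [hf, semi1, semi2, if_pos h1, if_neg h2]
    rfl
  have hf30 : ∀ y, y ∉ K1 a ε₁ → y ∈ K2 b ε₂ → f y = pt 3 0 := by
    intro y h1 h2
    simp only [hf, semi1, semi2, if_neg h1, if_pos h2]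
    rfl
  by_cases hK : ∃ T, 1 ≤ T ∧ x T ∈ K1 a ε₁ ∩ K2 b ε₂
  · obtain ⟨T, hT, hmem⟩ := hK
    exact absorb hA hB hx hf22 T hT hmem
  · push_neg at hK
    have hnot : ∀ t, 1 ≤ t → x t ∉ K1 a ε₁ ∩ K2 b ε₂ := fun t ht => hK t ht
    exfalso
    have hf3 : ∀ t, 1 ≤ t → f (x t) 0 + f (x t) 1 = 3 := by
      intro t ht
      rcases hreg hA hB hx hfS hf03 hf30 hnot t ht with ⟨_, _, hfe⟩ | ⟨_, _, hfe⟩ <;>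
        rw [hfe] <;> simp [pt0, pt1] <;> norm_num
    -- constants
    have he1pos : 0 < min (ε₁ / 2) (1 / 4) := lt_min (by linarith) (by norm_num)
    have he2pos : 0 < min (ε₂ / 2) (1 / 4) := lt_min (by linarith) (by norm_num)
    have he1le : min (ε₁ / 2) (1 / 4) ≤ 1 / 4 := min_le_right _ _
    have he2le : min (ε₂ / 2) (1 / 4) ≤ 1 / 4 := min_le_right _ _
    have hgpos : 0 < min (ε₁ / 2) (1 / 4) + min (ε₂ / 2) (1 / 4) := by linarith
    have hppa : pp (k1 a) ≤ 3 / 2 := pp_le_32 (hk1 hA)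
    have hppb : 3 / 2 ≤ pp (k2 b) := pp_ge_32 (hk2_pos hB) (hk2_le hB)
    have hgap : max 1 (pp (k1 a) - min (ε₁ / 2) (1 / 4)) +
        (min (ε₁ / 2) (1 / 4) + min (ε₂ / 2) (1 / 4)) ≤
        min 2 (pp (k2 b) + min (ε₂ / 2) (1 / 4)) := by
      have h1 : (3:ℝ) / 2 + min (ε₂ / 2) (1 / 4) ≤ min 2 (pp (k2 b) + min (ε₂ / 2) (1 / 4)) :=
        le_min (by linarith) (by linarith)
      have h2 : max 1 (pp (k1 a) - min (ε₁ / 2) (1 / 4)) ≤ 3 / 2 - min (ε₁ / 2) (1 / 4) :=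
        max_le (by linarith) (by linarith)
      linarith
    -- choose a large time threshold N
    obtain ⟨N0, hN0⟩ := exists_nat_gt (max (max (4 / ε₁) (4 / ε₂))
      (5 / (min (ε₁ / 2) (1 / 4) + min (ε₂ / 2) (1 / 4))))
    have hN1 : 1 ≤ N0 + 1 := by omega
    have hNpos : (0:ℝ) < ((N0 + 1 : ℕ) : ℝ) := by positivity
    have hNa : 4 / ε₁ < ((N0 + 1 : ℕ) : ℝ) := by
      have h1 : 4 / ε₁ ≤ max (max (4 / ε₁) (4 / ε₂))
          (5 / (min (ε₁ / 2) (1 / 4) + min (ε₂ / 2) (1 / 4))) :=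
        le_trans (le_max_left _ _) (le_max_left _ _)
      have h2 : ((N0:ℝ)) ≤ ((N0 + 1 : ℕ) : ℝ) := by push_cast; linarith
      linarith
    have hNb : 4 / ε₂ < ((N0 + 1 : ℕ) : ℝ) := by
      have h1 : 4 / ε₂ ≤ max (max (4 / ε₁) (4 / ε₂))
          (5 / (min (ε₁ / 2) (1 / 4) + min (ε₂ / 2) (1 / 4))) :=
        le_trans (le_max_right _ _) (le_max_left _ _)
      have h2 : ((N0:ℝ)) ≤ ((N0 + 1 : ℕ) : ℝ) := by push_cast; linarith
      linarith
    have hNg : 5 / (min (ε₁ / 2) (1 / 4) + min (ε₂ / 2) (1 / 4)) < ((N0 + 1 : ℕ) : ℝ) := by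
      have h1 : 5 / (min (ε₁ / 2) (1 / 4) + min (ε₂ / 2) (1 / 4)) ≤
          max (max (4 / ε₁) (4 / ε₂)) (5 / (min (ε₁ / 2) (1 / 4) + min (ε₂ / 2) (1 / 4))) :=
        le_max_right _ _
      have h2 : ((N0:ℝ)) ≤ ((N0 + 1 : ℕ) : ℝ) := by push_cast; linarith
      linarith
    have hNe1 : 1 / ((N0 + 1 : ℕ) : ℝ) ≤ ε₁ / 4 := by
      rw [div_le_div_iff₀ hNpos (by norm_num : (0:ℝ) < 4)]
      rw [div_lt_iff₀ hε₁] at hNa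
      nlinarith
    have hNe2 : 1 / ((N0 + 1 : ℕ) : ℝ) ≤ ε₂ / 4 := by
      rw [div_le_div_iff₀ hNpos (by norm_num : (0:ℝ) < 4)]
      rw [div_lt_iff₀ hε₂] at hNb
      nlinarith
    have hN5g : 5 / ((N0 + 1 : ℕ) : ℝ) < min (ε₁ / 2) (1 / 4) + min (ε₂ / 2) (1 / 4) := by
      rw [div_lt_iff₀ hNpos]
      rw [div_lt_iff₀ hgpos] at hNg
      linarith
    -- get a switch time
    obtain ⟨t, htN, hsw⟩ := switch_exists hA hB hx hfS hf03 hf30 hnot (N0 + 1) hN1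
    have ht1 : 1 ≤ t := le_trans hN1 htN
    have htR : (0:ℝ) < (t : ℝ) := by exact_mod_cast ht1
    have ht1R : (0:ℝ) < (t : ℝ) + 1 := by linarith
    have htNR : ((N0 + 1 : ℕ) : ℝ) ≤ (t : ℝ) := by exact_mod_cast htN
    have hinv_t : 1 / (t : ℝ) ≤ 1 / ((N0 + 1 : ℕ) : ℝ) :=
      one_div_le_one_div_of_le hNpos htNR
    have hinv_t1 : 1 / ((t : ℝ) + 1) ≤ 1 / ((N0 + 1 : ℕ) : ℝ) :=
      one_div_le_one_div_of_le hNpos (by linarith)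
    have hsum_t := sum_close hx hfS hf3 t ht1
    have hsum_t1 := sum_close hx hfS hf3 (t + 1) (by omega)
    have hsum_t1' : |x (t + 1) 0 + x (t + 1) 1 - 3| ≤ 1 / ((t : ℝ) + 1) := by
      have : ((t + 1 : ℕ) : ℝ) = (t : ℝ) + 1 := by push_cast; ring
      rw [← this]
      exact hsum_t1
    have hSt := traj_mem hx hfS t ht1
    have hSt1 := traj_mem hx hfS (t + 1) (by omega)
    have hx0b := spd_x0 hSt
    rcases hsw with ⟨h1, h2⟩ | ⟨h1, h2⟩
    · -- x t ∈ K1, x (t+1) ∉ K1 : pull towards (0,3)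
      obtain ⟨_, hnK2, hfe⟩ : x t ∈ K1 a ε₁ ∧ x t ∉ K2 b ε₂ ∧ f (x t) = pt 0 3 := by
        rcases hreg hA hB hx hfS hf03 hf30 hnot t ht1 with h | h
        · exact h
        · exact absurd h1 h.1
      have hCD := sep_CD hB hε₂ hSt hnK2 (by positivity : (0:ℝ) ≤ 1 / (t : ℝ))
        (le_trans hinv_t hNe2) hsum_t
      have hDC := sep_DC hA hε₁ hSt1 h2 (by positivity : (0:ℝ) ≤ 1 / ((t : ℝ) + 1))
        (le_trans hinv_t1 hNe1) hsum_t1'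
      have hj := traj_coord hx t ht1 0
      rw [hfe, pt0] at hj
      have hjump : x t 0 - x (t + 1) 0 ≤ 3 * (1 / ((t : ℝ) + 1)) := by
        rw [hj]
        have heq : x t 0 - ((t : ℝ) + 1)⁻¹ * ((t : ℝ) * x t 0 + 0) =
            x t 0 * (1 / ((t : ℝ) + 1)) := by
          field_simp
          ring
        rw [heq]
        have hpos : (0:ℝ) < 1 / ((t : ℝ) + 1) := by positivity
        exact mul_le_mul_of_nonneg_right hx0b.2 hpos.le
      have h5eq : 5 / ((N0 + 1 : ℕ) : ℝ) = 5 * (1 / ((N0 + 1 : ℕ) : ℝ)) := by ring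
      linarith [hCD, hDC, hjump, hinv_t, hinv_t1, hN5g, hgap]
    · -- x t ∉ K1, x (t+1) ∈ K1 : pull towards (3,0)
      obtain ⟨_, hK2t, hfe⟩ : x t ∉ K1 a ε₁ ∧ x t ∈ K2 b ε₂ ∧ f (x t) = pt 3 0 := by
        rcases hreg hA hB hx hfS hf03 hf30 hnot t ht1 with h | h
        · exact absurd h.1 h1
        · exact h
      have hnK2t1 : x (t + 1) ∉ K2 b ε₂ := fun hc => hnot (t + 1) (by omega) ⟨h2, hc⟩
      have hCD := sep_CD hB hε₂ hSt1 hnK2t1 (by positivity : (0:ℝ) ≤ 1 / ((t : ℝ) + 1))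
        (le_trans hinv_t1 hNe2) hsum_t1'
      have hDC := sep_DC hA hε₁ hSt h1 (by positivity : (0:ℝ) ≤ 1 / (t : ℝ))
        (le_trans hinv_t hNe1) hsum_t
      have hj := traj_coord hx t ht1 0
      rw [hfe, pt0] at hj
      have hjump : x (t + 1) 0 - x t 0 ≤ 3 * (1 / ((t : ℝ) + 1)) := by
        rw [hj]
        have heq : ((t : ℝ) + 1)⁻¹ * ((t : ℝ) * x t 0 + 3) - x t 0 =
            (3 - x t 0) * (1 / ((t : ℝ) + 1)) := by
          field_simp
          ring
        rw [heq]
        have hpos : (0:ℝ) < 1 / ((t : ℝ) + 1) := by positivity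
        exact mul_le_mul_of_nonneg_right (by linarith [hx0b.1] : 3 - x t 0 ≤ 3) hpos.le
      have h5eq : 5 / ((N0 + 1 : ℕ) : ℝ) = 5 * (1 / ((N0 + 1 : ℕ) : ℝ)) := by ring
      linarith [hCD, hDC, hjump, hinv_t, hinv_t1, hN5g, hgap]
end
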